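/- arXiv:1512.04596 — 5 statements merged into one kernel-verified Lean document; each statement's English description precedes it below -/
import Mathlib

section
/- Let Ω = {ω₁, ω₂, ω₃} with the uniform probability P, and let θ be the cyclic bijection ω₁ ↦ ω₂ ↦ ω₃ ↦ ω₁. Define σ(ω₁) = 2.25, σ(ω₂) = 1.5, σ(ω₃) = 2, and τ(ω₁) = τ(ω₂) = τ(ω₃) = 1 (so that E[σ] = 5.75/3 < 2·E[τ]). Then there is no function V : Ω → ℝ² with 0 ≤ V(ω)(1) ≤ V(ω)(2) for all ω, satisfying V(θω) = G¹_ω(V(ω)) for all ω ∈ Ω, where G¹_ω(u) equals the nondecreasing rearrangement of ([u(1) + σ(ω) − 1]⁺, [u(2) − 1]⁺) if u(1) = 0, and the nondecreasing rearrangement of ([u(1) − 1]⁺, [u(2) + σ(ω) − 1]⁺) if u(1) > 0. -/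
open MeasureTheory ProbabilityTheory Filter

noncomputable section

/-- Positive part `[x]⁺ = max(x,0)`. -/
def pos (x : ℝ) : ℝ := max x 0

/-- Nondecreasing rearrangement of a finite real vector. -/
def sortVec {n : ℕ} (u : Fin n → ℝ) : Fin n → ℝ := u ∘ Tuple.sort u

/-- `u` belongs to `Ō_n`: nonnegative and nondecreasing coordinates. -/
def OSorted {n : ℕ} (u : Fin n → ℝ) : Prop := (∀ i, 0 ≤ u i) ∧ Monotone u

/-- Two-sided iterates `θ^n`, `n ∈ ℤ`, of a measurable bijection. -/
def iterZ {Ω : Type*} [MeasurableSpace Ω] (θ : Ω ≃ᵐ Ω) : ℤ → Ω → Ω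
  | Int.ofNat n => (⇑θ)^[n]
  | Int.negSucc n => (⇑θ.symm)^[n + 1]

/-- The term `σ∘θ^{-k} − Σ_{i=1}^k τ∘θ^{-i}` (here `θinv = θ⁻¹`). -/
def Zterm {Ω : Type*} (θinv : Ω → Ω) (σ τ : Ω → ℝ) (k : ℕ) (ω : Ω) : ℝ :=
  σ (θinv^[k] ω) - ∑ i ∈ Finset.Icc 1 k, τ (θinv^[i] ω)

/-- `Z_ℓ = [sup_{k ≥ ℓ} (σ∘θ^{-k} − Σ_{i=1}^k τ∘θ^{-i})]⁺`. -/
def Zfam {Ω : Type*} (θinv : Ω → Ω) (σ τ : Ω → ℝ) (ℓ : ℕ) (ω : Ω) : ℝ :=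
  pos (⨆ k : {k : ℕ // ℓ ≤ k}, Zterm θinv σ τ (k : ℕ) ω)

/-- GI/GI input: the doubly infinite sequences `(σ∘θ^n)` and `(τ∘θ^n)` are
jointly independent, and each is identically distributed. -/
def GIGI {Ω : Type*} [MeasurableSpace Ω] (μ : Measure Ω) (θ : Ω ≃ᵐ Ω) (σ τ : Ω → ℝ) : Prop :=
  iIndepFun
    (fun x : ℤ × Bool => fun ω => if x.2 then σ (iterZ θ x.1 ω) else τ (iterZ θ x.1 ω)) μ
  ∧ (∀ n : ℤ, IdentDistrib (fun ω => σ (iterZ θ n ω)) σ μ μ)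
  ∧ (∀ n : ℤ, IdentDistrib (fun ω => τ (iterZ θ n ω)) τ μ μ)

/-- The distribution of `τ` has unbounded support. -/
def UnboundedSupport {Ω : Type*} [MeasurableSpace Ω] (μ : Measure Ω) (τ : Ω → ℝ) : Prop :=
  ∀ M : ℝ, 0 < M → 0 < μ {ω | M < τ ω}

/-- The Kiefer–Wolfowitz map `G(u) = sorted [u + σe₁ − τ𝟙]⁺`. -/
def Gmap (S : ℕ) (σ τ : ℝ) (u : Fin S → ℝ) : Fin S → ℝ :=
  sortVec fun i => pos (u i + (if (i : ℕ) = 0 then σ else 0) - τ)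

/-- The map `G^p` driving the J_{p+1}SW service profile. -/
def Gp (S p : ℕ) (hS : 0 < S) (σ τ : ℝ) (u : Fin S → ℝ) : Fin S → ℝ :=
  if u ⟨0, hS⟩ = 0 then Gmap S σ τ u
  else sortVec fun i => pos (u i + (if (i : ℕ) = p then σ else 0) - τ)

/-- The map `Γ^p`. -/
def Gamma (p : ℕ) (σ τ : ℝ) (u : Fin p → ℝ) : Fin p → ℝ := fun j =>
  if h : (j : ℕ) + 1 < p then pos (u ⟨(j : ℕ) + 1, h⟩ - τ) else pos (max (u j) σ - τ)

/-- The map `Ψ^p`. -/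
def Psi (p : ℕ) (σ τ : ℝ) (u : Fin p → ℝ) : Fin p → ℝ := fun j =>
  if h : (j : ℕ) + 1 < p then pos (min (max (u j) σ) (u ⟨(j : ℕ) + 1, h⟩) - τ)
  else pos (max (u j) σ - τ)

/-- The map `Φ^p` on `Ō_S` (with `1 ≤ p < S`). -/
def Phi (S p : ℕ) (hp : p < S) (σ τ : ℝ) (u : Fin S → ℝ) : Fin S → ℝ := fun j =>
  let ind : ℝ := if 0 < u ⟨0, Nat.lt_of_le_of_lt (Nat.zero_le p) hp⟩ then u ⟨p, hp⟩ else 0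
  if h : (j : ℕ) + 1 < S then
    if (j : ℕ) < p then pos (min (max (u j) σ) (u ⟨(j : ℕ) + 1, h⟩) - τ)
    else pos (min (max (u j) (σ + ind)) (u ⟨(j : ℕ) + 1, h⟩) - τ)
  else pos (max (u j) (σ + ind) - τ)

/-- The loss-system map `H^p(u) = sorted [u + σ·1_{u(1)=0}e₁ − τ𝟙]⁺`. -/
def Hmap (p : ℕ) (hp : 0 < p) (σ τ : ℝ) (u : Fin p → ℝ) : Fin p → ℝ :=
  sortVec fun i => pos (u i + (if (i : ℕ) = 0 ∧ u ⟨0, hp⟩ = 0 then σ else 0) - τ)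

end

lemma mono_pair {x y : ℝ} (h : x ≤ y) : Monotone ![x, y] := by
  intro i j hij
  fin_cases i <;> fin_cases j <;> simp_all

lemma sortVec_pair_le {x y : ℝ} (h : x ≤ y) : sortVec ![x, y] = ![x, y] := by
  have := (Tuple.comp_sort_eq_comp_iff_monotone (f := ![x,y]) (σ := Equiv.refl _)).2
    (by simpa using mono_pair h)
  simpa [sortVec] using this.symm

lemma sortVec_pair_ge {x y : ℝ} (h : y ≤ x) : sortVec ![x, y] = ![y, x] := by
  have hms : ![x,y] ∘ (Equiv.swap 0 1) = ![y,x] := by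
    funext i; fin_cases i <;> simp [Equiv.swap_apply_of_ne_of_ne]
  have := (Tuple.comp_sort_eq_comp_iff_monotone (f := ![x,y]) (σ := Equiv.swap 0 1)).2
    (by rw [hms]; exact mono_pair h)
  rw [hms] at this
  simpa [sortVec] using this.symm

lemma sortVec_pair (x y : ℝ) : sortVec ![x, y] = ![min x y, max x y] := by
  rcases le_total x y with h | h
  · rw [sortVec_pair_le h, min_eq_left h, max_eq_right h]
  · rw [sortVec_pair_ge h, min_eq_right h, max_eq_left h]

lemma pos_cases (x : ℝ) : (pos x = x ∧ 0 ≤ x) ∨ (pos x = 0 ∧ x ≤ 0) := by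
  rw [pos]
  rcases le_total 0 x with h | h
  · exact Or.inl ⟨max_eq_left h, h⟩
  · exact Or.inr ⟨max_eq_right h, h⟩

lemma minmax_cases (a b : ℝ) :
    (min a b = a ∧ max a b = b ∧ a ≤ b) ∨ (min a b = b ∧ max a b = a ∧ b ≤ a) := by
  rcases le_total a b with h | h
  · exact Or.inl ⟨min_eq_left h, max_eq_right h, h⟩
  · exact Or.inr ⟨min_eq_right h, max_eq_left h, h⟩

lemma pos_eq_self {x : ℝ} (h : 0 ≤ x) : pos x = x := max_eq_left h

set_option maxHeartbeats 1000000 in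
theorem stmt2 :
    ¬ ∃ V : Fin 3 → Fin 2 → ℝ,
      (∀ ω : Fin 3, 0 ≤ V ω 0 ∧ V ω 0 ≤ V ω 1) ∧
      (∀ ω : Fin 3, V (ω + 1) =
        (if V ω 0 = 0 then
          sortVec ![pos (V ω 0 + (![2.25, 1.5, 2] : Fin 3 → ℝ) ω - 1), pos (V ω 1 - 1)]
        else
          sortVec ![pos (V ω 0 - 1), pos (V ω 1 + (![2.25, 1.5, 2] : Fin 3 → ℝ) ω - 1)])) := by
  rintro ⟨V, h1, h2⟩
  have e0 := h2 0
  have e1 := h2 1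
  have e2 := h2 2
  simp only [sortVec_pair, Matrix.cons_val_zero, Matrix.cons_val_one, Matrix.head_cons,
    Matrix.cons_val_two, Matrix.tail_cons, show (0:Fin 3)+1 = 1 from rfl,
    show (1:Fin 3)+1 = 2 from rfl, show (2:Fin 3)+1 = 0 from rfl] at e0 e1 e2
  obtain ⟨ha0, hab0⟩ := h1 0
  obtain ⟨ha1, hab1⟩ := h1 1
  obtain ⟨ha2, hab2⟩ := h1 2
  by_cases hz0 : V 0 0 = 0 <;> by_cases hz1 : V 1 0 = 0 <;> by_cases hz2 : V 2 0 = 0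
  · rw [if_pos hz0, hz0] at e0
    rw [if_pos hz1, hz1] at e1
    rw [if_pos hz2, hz2] at e2
    have e00 := congrFun e0 0
    have e01 := congrFun e0 1
    have e10 := congrFun e1 0
    have e11 := congrFun e1 1
    have e20 := congrFun e2 0
    have e21 := congrFun e2 1
    simp only [Matrix.cons_val_zero, Matrix.cons_val_one, Matrix.head_cons] at e00 e01 e10 e11 e20 e21
    clear e0 e1 e2
    have hc0 : pos ((0:ℝ) + 2.25 - 1) = 1.25 := by rw [pos]; norm_num
    rw [hc0] at e00 e01
    have hc1 : pos ((0:ℝ) + 1.5 - 1) = 0.5 := by rw [pos]; norm_num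
    rw [hc1] at e10 e11
    have hc2 : pos ((0:ℝ) + 2 - 1) = 1 := by rw [pos]; norm_num
    rw [hc2] at e20 e21
    rcases minmax_cases (1.25:ℝ) (pos (V 0 1 - 1)) with ⟨hm0, hM0, ho0⟩ | ⟨hm0, hM0, ho0⟩ <;>
      rcases pos_cases (V 0 1 - 1) with ⟨hq0, hr0⟩ | ⟨hq0, hr0⟩ <;>
      rcases minmax_cases (0.5:ℝ) (pos (V 1 1 - 1)) with ⟨hm1, hM1, ho1⟩ | ⟨hm1, hM1, ho1⟩ <;>
      rcases pos_cases (V 1 1 - 1) with ⟨hq1, hr1⟩ | ⟨hq1, hr1⟩ <;>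
      rcases minmax_cases (1:ℝ) (pos (V 2 1 - 1)) with ⟨hm2, hM2, ho2⟩ | ⟨hm2, hM2, ho2⟩ <;>
      rcases pos_cases (V 2 1 - 1) with ⟨hq2, hr2⟩ | ⟨hq2, hr2⟩ <;>
      linarith
  · rw [if_pos hz0, hz0] at e0
    rw [if_pos hz1, hz1] at e1
    rw [if_neg hz2] at e2
    have hp2 : 0 < V 2 0 := ha2.lt_of_ne (Ne.symm hz2)
    have e00 := congrFun e0 0
    have e01 := congrFun e0 1
    have e10 := congrFun e1 0
    have e11 := congrFun e1 1
    have e20 := congrFun e2 0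
    have e21 := congrFun e2 1
    simp only [Matrix.cons_val_zero, Matrix.cons_val_one, Matrix.head_cons] at e00 e01 e10 e11 e20 e21
    clear e0 e1 e2
    have hc0 : pos ((0:ℝ) + 2.25 - 1) = 1.25 := by rw [pos]; norm_num
    rw [hc0] at e00 e01
    have hc1 : pos ((0:ℝ) + 1.5 - 1) = 0.5 := by rw [pos]; norm_num
    rw [hc1] at e10 e11
    have hY2 : pos (V 2 1 + 2 - 1) = V 2 1 + 2 - 1 := pos_eq_self (by linarith)
    have hle2 : pos (V 2 0 - 1) ≤ V 2 1 + 2 - 1 := by rw [pos]; apply max_le <;> linarith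
    rw [hY2] at e20 e21
    rw [min_eq_left hle2] at e20
    rw [max_eq_right hle2] at e21
    rcases minmax_cases (1.25:ℝ) (pos (V 0 1 - 1)) with ⟨hm0, hM0, ho0⟩ | ⟨hm0, hM0, ho0⟩ <;>
      rcases pos_cases (V 0 1 - 1) with ⟨hq0, hr0⟩ | ⟨hq0, hr0⟩ <;>
      rcases minmax_cases (0.5:ℝ) (pos (V 1 1 - 1)) with ⟨hm1, hM1, ho1⟩ | ⟨hm1, hM1, ho1⟩ <;>
      rcases pos_cases (V 1 1 - 1) with ⟨hq1, hr1⟩ | ⟨hq1, hr1⟩ <;>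
      rcases pos_cases (V 2 0 - 1) with ⟨hq2, hr2⟩ | ⟨hq2, hr2⟩ <;>
      linarith
  · rw [if_pos hz0, hz0] at e0
    rw [if_neg hz1] at e1
    have hp1 : 0 < V 1 0 := ha1.lt_of_ne (Ne.symm hz1)
    rw [if_pos hz2, hz2] at e2
    have e00 := congrFun e0 0
    have e01 := congrFun e0 1
    have e10 := congrFun e1 0
    have e11 := congrFun e1 1
    have e20 := congrFun e2 0
    have e21 := congrFun e2 1
    simp only [Matrix.cons_val_zero, Matrix.cons_val_one, Matrix.head_cons] at e00 e01 e10 e11 e20 e21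
    clear e0 e1 e2
    have hc0 : pos ((0:ℝ) + 2.25 - 1) = 1.25 := by rw [pos]; norm_num
    rw [hc0] at e00 e01
    have hY1 : pos (V 1 1 + 1.5 - 1) = V 1 1 + 1.5 - 1 := pos_eq_self (by linarith)
    have hle1 : pos (V 1 0 - 1) ≤ V 1 1 + 1.5 - 1 := by rw [pos]; apply max_le <;> linarith
    rw [hY1] at e10 e11
    rw [min_eq_left hle1] at e10
    rw [max_eq_right hle1] at e11
    have hc2 : pos ((0:ℝ) + 2 - 1) = 1 := by rw [pos]; norm_num
    rw [hc2] at e20 e21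
    rcases minmax_cases (1.25:ℝ) (pos (V 0 1 - 1)) with ⟨hm0, hM0, ho0⟩ | ⟨hm0, hM0, ho0⟩ <;>
      rcases pos_cases (V 0 1 - 1) with ⟨hq0, hr0⟩ | ⟨hq0, hr0⟩ <;>
      rcases pos_cases (V 1 0 - 1) with ⟨hq1, hr1⟩ | ⟨hq1, hr1⟩ <;>
      rcases minmax_cases (1:ℝ) (pos (V 2 1 - 1)) with ⟨hm2, hM2, ho2⟩ | ⟨hm2, hM2, ho2⟩ <;>
      rcases pos_cases (V 2 1 - 1) with ⟨hq2, hr2⟩ | ⟨hq2, hr2⟩ <;>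
      linarith
  · rw [if_pos hz0, hz0] at e0
    rw [if_neg hz1] at e1
    have hp1 : 0 < V 1 0 := ha1.lt_of_ne (Ne.symm hz1)
    rw [if_neg hz2] at e2
    have hp2 : 0 < V 2 0 := ha2.lt_of_ne (Ne.symm hz2)
    have e00 := congrFun e0 0
    have e01 := congrFun e0 1
    have e10 := congrFun e1 0
    have e11 := congrFun e1 1
    have e20 := congrFun e2 0
    have e21 := congrFun e2 1
    simp only [Matrix.cons_val_zero, Matrix.cons_val_one, Matrix.head_cons] at e00 e01 e10 e11 e20 e21
    clear e0 e1 e2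
    have hc0 : pos ((0:ℝ) + 2.25 - 1) = 1.25 := by rw [pos]; norm_num
    rw [hc0] at e00 e01
    have hY1 : pos (V 1 1 + 1.5 - 1) = V 1 1 + 1.5 - 1 := pos_eq_self (by linarith)
    have hle1 : pos (V 1 0 - 1) ≤ V 1 1 + 1.5 - 1 := by rw [pos]; apply max_le <;> linarith
    rw [hY1] at e10 e11
    rw [min_eq_left hle1] at e10
    rw [max_eq_right hle1] at e11
    have hY2 : pos (V 2 1 + 2 - 1) = V 2 1 + 2 - 1 := pos_eq_self (by linarith)
    have hle2 : pos (V 2 0 - 1) ≤ V 2 1 + 2 - 1 := by rw [pos]; apply max_le <;> linarith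
    rw [hY2] at e20 e21
    rw [min_eq_left hle2] at e20
    rw [max_eq_right hle2] at e21
    rcases minmax_cases (1.25:ℝ) (pos (V 0 1 - 1)) with ⟨hm0, hM0, ho0⟩ | ⟨hm0, hM0, ho0⟩ <;>
      rcases pos_cases (V 0 1 - 1) with ⟨hq0, hr0⟩ | ⟨hq0, hr0⟩ <;>
      rcases pos_cases (V 1 0 - 1) with ⟨hq1, hr1⟩ | ⟨hq1, hr1⟩ <;>
      rcases pos_cases (V 2 0 - 1) with ⟨hq2, hr2⟩ | ⟨hq2, hr2⟩ <;>
      linarith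
  · rw [if_neg hz0] at e0
    have hp0 : 0 < V 0 0 := ha0.lt_of_ne (Ne.symm hz0)
    rw [if_pos hz1, hz1] at e1
    rw [if_pos hz2, hz2] at e2
    have e00 := congrFun e0 0
    have e01 := congrFun e0 1
    have e10 := congrFun e1 0
    have e11 := congrFun e1 1
    have e20 := congrFun e2 0
    have e21 := congrFun e2 1
    simp only [Matrix.cons_val_zero, Matrix.cons_val_one, Matrix.head_cons] at e00 e01 e10 e11 e20 e21
    clear e0 e1 e2
    have hY0 : pos (V 0 1 + 2.25 - 1) = V 0 1 + 2.25 - 1 := pos_eq_self (by linarith)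
    have hle0 : pos (V 0 0 - 1) ≤ V 0 1 + 2.25 - 1 := by rw [pos]; apply max_le <;> linarith
    rw [hY0] at e00 e01
    rw [min_eq_left hle0] at e00
    rw [max_eq_right hle0] at e01
    have hc1 : pos ((0:ℝ) + 1.5 - 1) = 0.5 := by rw [pos]; norm_num
    rw [hc1] at e10 e11
    have hc2 : pos ((0:ℝ) + 2 - 1) = 1 := by rw [pos]; norm_num
    rw [hc2] at e20 e21
    rcases pos_cases (V 0 0 - 1) with ⟨hq0, hr0⟩ | ⟨hq0, hr0⟩ <;>
      rcases minmax_cases (0.5:ℝ) (pos (V 1 1 - 1)) with ⟨hm1, hM1, ho1⟩ | ⟨hm1, hM1, ho1⟩ <;>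
      rcases pos_cases (V 1 1 - 1) with ⟨hq1, hr1⟩ | ⟨hq1, hr1⟩ <;>
      rcases minmax_cases (1:ℝ) (pos (V 2 1 - 1)) with ⟨hm2, hM2, ho2⟩ | ⟨hm2, hM2, ho2⟩ <;>
      rcases pos_cases (V 2 1 - 1) with ⟨hq2, hr2⟩ | ⟨hq2, hr2⟩ <;>
      linarith
  · rw [if_neg hz0] at e0
    have hp0 : 0 < V 0 0 := ha0.lt_of_ne (Ne.symm hz0)
    rw [if_pos hz1, hz1] at e1
    rw [if_neg hz2] at e2
    have hp2 : 0 < V 2 0 := ha2.lt_of_ne (Ne.symm hz2)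
    have e00 := congrFun e0 0
    have e01 := congrFun e0 1
    have e10 := congrFun e1 0
    have e11 := congrFun e1 1
    have e20 := congrFun e2 0
    have e21 := congrFun e2 1
    simp only [Matrix.cons_val_zero, Matrix.cons_val_one, Matrix.head_cons] at e00 e01 e10 e11 e20 e21
    clear e0 e1 e2
    have hY0 : pos (V 0 1 + 2.25 - 1) = V 0 1 + 2.25 - 1 := pos_eq_self (by linarith)
    have hle0 : pos (V 0 0 - 1) ≤ V 0 1 + 2.25 - 1 := by rw [pos]; apply max_le <;> linarith
    rw [hY0] at e00 e01
    rw [min_eq_left hle0] at e00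
    rw [max_eq_right hle0] at e01
    have hc1 : pos ((0:ℝ) + 1.5 - 1) = 0.5 := by rw [pos]; norm_num
    rw [hc1] at e10 e11
    have hY2 : pos (V 2 1 + 2 - 1) = V 2 1 + 2 - 1 := pos_eq_self (by linarith)
    have hle2 : pos (V 2 0 - 1) ≤ V 2 1 + 2 - 1 := by rw [pos]; apply max_le <;> linarith
    rw [hY2] at e20 e21
    rw [min_eq_left hle2] at e20
    rw [max_eq_right hle2] at e21
    rcases pos_cases (V 0 0 - 1) with ⟨hq0, hr0⟩ | ⟨hq0, hr0⟩ <;>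
      rcases minmax_cases (0.5:ℝ) (pos (V 1 1 - 1)) with ⟨hm1, hM1, ho1⟩ | ⟨hm1, hM1, ho1⟩ <;>
      rcases pos_cases (V 1 1 - 1) with ⟨hq1, hr1⟩ | ⟨hq1, hr1⟩ <;>
      rcases pos_cases (V 2 0 - 1) with ⟨hq2, hr2⟩ | ⟨hq2, hr2⟩ <;>
      linarith
  · rw [if_neg hz0] at e0
    have hp0 : 0 < V 0 0 := ha0.lt_of_ne (Ne.symm hz0)
    rw [if_neg hz1] at e1
    have hp1 : 0 < V 1 0 := ha1.lt_of_ne (Ne.symm hz1)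
    rw [if_pos hz2, hz2] at e2
    have e00 := congrFun e0 0
    have e01 := congrFun e0 1
    have e10 := congrFun e1 0
    have e11 := congrFun e1 1
    have e20 := congrFun e2 0
    have e21 := congrFun e2 1
    simp only [Matrix.cons_val_zero, Matrix.cons_val_one, Matrix.head_cons] at e00 e01 e10 e11 e20 e21
    clear e0 e1 e2
    have hY0 : pos (V 0 1 + 2.25 - 1) = V 0 1 + 2.25 - 1 := pos_eq_self (by linarith)
    have hle0 : pos (V 0 0 - 1) ≤ V 0 1 + 2.25 - 1 := by rw [pos]; apply max_le <;> linarith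
    rw [hY0] at e00 e01
    rw [min_eq_left hle0] at e00
    rw [max_eq_right hle0] at e01
    have hY1 : pos (V 1 1 + 1.5 - 1) = V 1 1 + 1.5 - 1 := pos_eq_self (by linarith)
    have hle1 : pos (V 1 0 - 1) ≤ V 1 1 + 1.5 - 1 := by rw [pos]; apply max_le <;> linarith
    rw [hY1] at e10 e11
    rw [min_eq_left hle1] at e10
    rw [max_eq_right hle1] at e11
    have hc2 : pos ((0:ℝ) + 2 - 1) = 1 := by rw [pos]; norm_num
    rw [hc2] at e20 e21
    rcases pos_cases (V 0 0 - 1) with ⟨hq0, hr0⟩ | ⟨hq0, hr0⟩ <;>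
      rcases pos_cases (V 1 0 - 1) with ⟨hq1, hr1⟩ | ⟨hq1, hr1⟩ <;>
      rcases minmax_cases (1:ℝ) (pos (V 2 1 - 1)) with ⟨hm2, hM2, ho2⟩ | ⟨hm2, hM2, ho2⟩ <;>
      rcases pos_cases (V 2 1 - 1) with ⟨hq2, hr2⟩ | ⟨hq2, hr2⟩ <;>
      linarith
  · rw [if_neg hz0] at e0
    have hp0 : 0 < V 0 0 := ha0.lt_of_ne (Ne.symm hz0)
    rw [if_neg hz1] at e1
    have hp1 : 0 < V 1 0 := ha1.lt_of_ne (Ne.symm hz1)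
    rw [if_neg hz2] at e2
    have hp2 : 0 < V 2 0 := ha2.lt_of_ne (Ne.symm hz2)
    have e00 := congrFun e0 0
    have e01 := congrFun e0 1
    have e10 := congrFun e1 0
    have e11 := congrFun e1 1
    have e20 := congrFun e2 0
    have e21 := congrFun e2 1
    simp only [Matrix.cons_val_zero, Matrix.cons_val_one, Matrix.head_cons] at e00 e01 e10 e11 e20 e21
    clear e0 e1 e2
    have hY0 : pos (V 0 1 + 2.25 - 1) = V 0 1 + 2.25 - 1 := pos_eq_self (by linarith)
    have hle0 : pos (V 0 0 - 1) ≤ V 0 1 + 2.25 - 1 := by rw [pos]; apply max_le <;> linarith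
    rw [hY0] at e00 e01
    rw [min_eq_left hle0] at e00
    rw [max_eq_right hle0] at e01
    have hY1 : pos (V 1 1 + 1.5 - 1) = V 1 1 + 1.5 - 1 := pos_eq_self (by linarith)
    have hle1 : pos (V 1 0 - 1) ≤ V 1 1 + 1.5 - 1 := by rw [pos]; apply max_le <;> linarith
    rw [hY1] at e10 e11
    rw [min_eq_left hle1] at e10
    rw [max_eq_right hle1] at e11
    have hY2 : pos (V 2 1 + 2 - 1) = V 2 1 + 2 - 1 := pos_eq_self (by linarith)
    have hle2 : pos (V 2 0 - 1) ≤ V 2 1 + 2 - 1 := by rw [pos]; apply max_le <;> linarith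
    rw [hY2] at e20 e21
    rw [min_eq_left hle2] at e20
    rw [max_eq_right hle2] at e21
    rcases pos_cases (V 0 0 - 1) with ⟨hq0, hr0⟩ | ⟨hq0, hr0⟩ <;>
      rcases pos_cases (V 1 0 - 1) with ⟨hq1, hr1⟩ | ⟨hq1, hr1⟩ <;>
      rcases pos_cases (V 2 0 - 1) with ⟨hq2, hr2⟩ | ⟨hq2, hr2⟩ <;>
      linarith
end

section
/- Let (Ω, F, P, θ) be a stationary ergodic quadruple carrying σ, τ as in the context, let S ≥ 1 and 0 ≤ p ≤ S−1. If there exists a measurable Ō_S-valued random vector W, with each coordinate W(i) integrable, satisfying W∘θ = G^p(W) P-almost surely, then E[σ] ≤ S·E[τ]. -/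
open MeasureTheory ProbabilityTheory Filter

theorem stmt3 {Ω : Type*} [MeasurableSpace Ω] (μ : MeasureTheory.Measure Ω)
    [MeasureTheory.IsProbabilityMeasure μ]
    (θ : Ω ≃ᵐ Ω) (hergo : Ergodic (⇑θ) μ)
    (σ τ : Ω → ℝ) (hσint : MeasureTheory.Integrable σ μ) (hτint : MeasureTheory.Integrable τ μ)
    (hσ0 : ∀ᵐ ω ∂μ, 0 ≤ σ ω) (hτ0 : ∀ᵐ ω ∂μ, 0 < τ ω)
    (S p : ℕ) (hS : 1 ≤ S) (hpS : p ≤ S - 1)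
    (W : Ω → Fin S → ℝ) (hWm : Measurable W)
    (hWint : ∀ i : Fin S, MeasureTheory.Integrable (fun ω => W ω i) μ)
    (hWs : ∀ᵐ ω ∂μ, OSorted (W ω))
    (hWr : ∀ᵐ ω ∂μ, W (θ ω) = Gp S p (by omega) (σ ω) (τ ω) (W ω)) :
    ∫ ω, σ ω ∂μ ≤ (S : ℝ) * ∫ ω, τ ω ∂μ := by
  have hp : p < S := by omega
  set V : Ω → ℝ := fun ω => ∑ i, W ω i with hV
  have hVint : MeasureTheory.Integrable V μ :=
    MeasureTheory.integrable_finset_sum _ fun i _ => hWint i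
  have hmp : MeasureTheory.MeasurePreserving (⇑θ) μ μ := hergo.toMeasurePreserving
  have hcomp : MeasureTheory.Integrable (fun ω => V (θ ω)) μ := by
    have h := θ.measurableEmbedding.integrable_map_iff (g := V) (μ := μ)
    rw [hmp.map_eq] at h
    exact h.mp hVint
  have hint : ∫ ω, V (θ ω) ∂μ = ∫ ω, V ω ∂μ :=
    hmp.integral_comp θ.measurableEmbedding V
  have hae : ∀ᵐ ω ∂μ, V ω + (σ ω - S * τ ω) ≤ V (θ ω) := by
    filter_upwards [hWr] with ω hω
    have key : ∀ k : ℕ, k < S →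
        V ω + (σ ω - S * τ ω) ≤
          ∑ i, sortVec (fun i : Fin S => pos (W ω i + (if (i : ℕ) = k then σ ω else 0) - τ ω)) i := by
      intro k hk
      have hsum : ∑ i, sortVec (fun i : Fin S => pos (W ω i + (if (i : ℕ) = k then σ ω else 0) - τ ω)) i
          = ∑ i, pos (W ω i + (if (i : ℕ) = k then σ ω else 0) - τ ω) := by
        simpa [sortVec, Function.comp] using
          Equiv.sum_comp (Tuple.sort (fun i : Fin S => pos (W ω i + (if (i : ℕ) = k then σ ω else 0) - τ ω)))
            (fun i : Fin S => pos (W ω i + (if (i : ℕ) = k then σ ω else 0) - τ ω))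
      rw [hsum]
      have h1 : ∑ i : Fin S, (if (i : ℕ) = k then σ ω else 0) = σ ω := by
        have he : ∀ i : Fin S, ((i : ℕ) = k) = (i = ⟨k, hk⟩) := by
          intro i; simp [Fin.ext_iff]
        simp only [he]
        simp
      have h2 : V ω + (σ ω - S * τ ω)
          = ∑ i : Fin S, (W ω i + (if (i : ℕ) = k then σ ω else 0) - τ ω) := by
        rw [Finset.sum_sub_distrib, Finset.sum_add_distrib, h1, Finset.sum_const]
        simp [hV]
        ring
      rw [h2]
      exact Finset.sum_le_sum fun i _ => le_max_left _ _
    have hVθ : V (θ ω) = ∑ i, W (θ ω) i := rfl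
    rw [hVθ, hω]
    unfold Gp Gmap
    split
    · exact key 0 (by omega)
    · exact key p hp
  have hleft : MeasureTheory.Integrable (fun ω => V ω + (σ ω - S * τ ω)) μ :=
    hVint.add (hσint.sub (hτint.const_mul _))
  have hst : MeasureTheory.Integrable (fun ω => σ ω - (S : ℝ) * τ ω) μ :=
    hσint.sub (hτint.const_mul _)
  have hτc : MeasureTheory.Integrable (fun ω => (S : ℝ) * τ ω) μ := hτint.const_mul _
  have hmono := MeasureTheory.integral_mono_ae hleft hcomp hae
  rw [hint, MeasureTheory.integral_add hVint hst,
    MeasureTheory.integral_sub hσint hτc,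
    MeasureTheory.integral_const_mul] at hmono
  linarith
end

section
/- Let (Ω, F, P, θ) be a stationary ergodic quadruple carrying σ, τ as in the context and let p ≥ 1. Then the random vector Z^p := (Z_p, Z_{p−1}, …, Z_1) is almost surely finite, takes values in Ō_p, and satisfies Z^p∘θ = Γ^p(Z^p) P-a.s.; moreover it is the unique such solution: any measurable, almost surely finite Ō_p-valued random vector Z with Z∘θ = Γ^p(Z) a.s. satisfies Z = Z^p a.s. -/
open MeasureTheory ProbabilityTheory Filter

noncomputable section SQ
set_option linter.unusedSectionVars false
set_option linter.unusedVariables false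
namespace SQ

lemma pos_nonneg (x : ℝ) : 0 ≤ pos x := le_max_right _ _
lemma le_pos (x : ℝ) : x ≤ pos x := le_max_left _ _
lemma pos_mono {x y : ℝ} (h : x ≤ y) : pos x ≤ pos y := max_le_max h le_rfl
lemma pos_of_nonneg {x : ℝ} (h : 0 ≤ x) : pos x = x := max_eq_left h
lemma pos_of_nonpos {x : ℝ} (h : x ≤ 0) : pos x = 0 := max_eq_right h

lemma pos_sub_pos {x t : ℝ} (ht : 0 ≤ t) : pos (pos x - t) = pos (x - t) := by
  unfold pos
  rcases le_total x 0 with h | h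
  · rw [max_eq_right h, max_eq_right (by linarith), max_eq_right (by linarith)]
  · rw [max_eq_left h]

lemma pos_max_sub (a b t : ℝ) : pos (max a b - t) = max (pos (a - t)) (pos (b - t)) := by
  unfold pos
  rw [← max_sub_sub_right, max_max_max_comm, max_self]

variable {Ω : Type*}

lemma sum_Icc_shift (g : ℕ → ℝ) (k : ℕ) :
    ∑ i ∈ Finset.Icc 1 (k + 1), g i = g 1 + ∑ i ∈ Finset.Icc 1 k, g (i + 1) := by
  induction k with
  | zero => simp
  | succ k ih =>
    rw [Finset.sum_Icc_succ_top (by omega) g, ih,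
      Finset.sum_Icc_succ_top (by omega) (fun i => g (i + 1)), add_assoc]

def Tsum (T : Ω → Ω) (τ : Ω → ℝ) (k : ℕ) (ω : Ω) : ℝ :=
  ∑ i ∈ Finset.Icc 1 k, τ (T^[i] ω)

lemma Tsum_succ (T : Ω → Ω) (τ : Ω → ℝ) (k : ℕ) (ω : Ω) :
    Tsum T τ (k + 1) ω = τ (T ω) + Tsum T τ k (T ω) := by
  unfold Tsum
  rw [sum_Icc_shift (fun i => τ (T^[i] ω)) k]
  simp [Function.iterate_succ_apply]

lemma Tsum_succ_top (T : Ω → Ω) (τ : Ω → ℝ) (k : ℕ) (ω : Ω) :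
    Tsum T τ (k + 1) ω = Tsum T τ k ω + τ (T^[k+1] ω) :=
  Finset.sum_Icc_succ_top (by omega) _

lemma Tsum_add (T : Ω → Ω) (τ : Ω → ℝ) (a b : ℕ) (ω : Ω) :
    Tsum T τ (a + b) ω = Tsum T τ b ω + Tsum T τ a (T^[b] ω) := by
  induction b generalizing ω with
  | zero => simp [Tsum]
  | succ b ih =>
    have : a + (b + 1) = (a + b) + 1 := by omega
    rw [this, Tsum_succ, ih (T ω), Tsum_succ, add_assoc, Function.iterate_succ_apply]

lemma Tsum_nonneg {T : Ω → Ω} {τ : Ω → ℝ} {k : ℕ} {ω : Ω}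
    (h : ∀ i, 0 ≤ τ (T^[i] ω)) : 0 ≤ Tsum T τ k ω :=
  Finset.sum_nonneg fun i _ => h i

lemma Zterm_eq (T : Ω → Ω) (σ τ : Ω → ℝ) (k : ℕ) (ω : Ω) :
    Zterm T σ τ k ω = σ (T^[k] ω) - Tsum T τ k ω := rfl

lemma Zterm_zero (T : Ω → Ω) (σ τ : Ω → ℝ) (ω : Ω) : Zterm T σ τ 0 ω = σ ω := by
  simp [Zterm]

lemma Zterm_succ (T : Ω → Ω) (σ τ : Ω → ℝ) (k : ℕ) (ω : Ω) :
    Zterm T σ τ (k + 1) ω = Zterm T σ τ k (T ω) - τ (T ω) := by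
  rw [Zterm_eq, Zterm_eq, Tsum_succ, Function.iterate_succ_apply]
  ring


section Msup

variable (σ τ : Ω → ℝ)

/-- The (conditionally complete) tail supremum. -/
def Msup (T : Ω → Ω) (σ τ : Ω → ℝ) (ℓ : ℕ) (ω : Ω) : ℝ :=
  ⨆ k : {k : ℕ // ℓ ≤ k}, Zterm T σ τ (k : ℕ) ω

lemma Zfam_eq (T : Ω → Ω) (ℓ : ℕ) (ω : Ω) : Zfam T σ τ ℓ ω = pos (Msup T σ τ ℓ ω) := rfl

instance (ℓ : ℕ) : Nonempty {k : ℕ // ℓ ≤ k} := ⟨⟨ℓ, le_rfl⟩⟩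

variable {σ τ}
variable {T : Ω → Ω} {ω : Ω}

lemma bdd_sub (hb : BddAbove (Set.range fun k : ℕ => Zterm T σ τ k ω)) (ℓ : ℕ) :
    BddAbove (Set.range fun k : {k : ℕ // ℓ ≤ k} => Zterm T σ τ (k : ℕ) ω) :=
  hb.mono (by rintro x ⟨k, rfl⟩; exact ⟨k, rfl⟩)

lemma le_Msup (hb : BddAbove (Set.range fun k : ℕ => Zterm T σ τ k ω)) {ℓ k : ℕ}
    (hk : ℓ ≤ k) : Zterm T σ τ k ω ≤ Msup T σ τ ℓ ω :=
  le_ciSup (bdd_sub hb ℓ) (⟨k, hk⟩ : {k : ℕ // ℓ ≤ k})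

lemma Msup_le {ℓ : ℕ} {c : ℝ} (h : ∀ k, ℓ ≤ k → Zterm T σ τ k ω ≤ c) :
    Msup T σ τ ℓ ω ≤ c :=
  ciSup_le fun k => h k k.2

lemma Msup_mono (hb : BddAbove (Set.range fun k : ℕ => Zterm T σ τ k ω)) {ℓ ℓ' : ℕ}
    (h : ℓ ≤ ℓ') : Msup T σ τ ℓ' ω ≤ Msup T σ τ ℓ ω :=
  Msup_le fun k hk => le_Msup hb (h.trans hk)

lemma Msup_zero (hb : BddAbove (Set.range fun k : ℕ => Zterm T σ τ k ω)) :
    Msup T σ τ 0 ω = max (σ ω) (Msup T σ τ 1 ω) := by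
  apply le_antisymm
  · apply Msup_le
    intro k _
    match k with
    | 0 => rw [Zterm_zero]; exact le_max_left _ _
    | k + 1 => exact (le_Msup hb (by omega)).trans (le_max_right _ _)
  · refine max_le ?_ (Msup_mono hb (by omega))
    have := le_Msup hb (le_refl 0)
    rwa [Zterm_zero] at this

lemma Zterm_shift [MeasurableSpace Ω] (θ : Ω ≃ᵐ Ω) (k : ℕ) :
    Zterm (⇑θ.symm) σ τ (k + 1) (θ ω) = Zterm (⇑θ.symm) σ τ k ω - τ ω := by
  rw [Zterm_succ]
  simp [θ.symm_apply_apply]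

lemma Msup_shift [MeasurableSpace Ω] (θ : Ω ≃ᵐ Ω) (hb : BddAbove (Set.range fun k : ℕ => Zterm (⇑θ.symm) σ τ k ω)) (ℓ : ℕ) :
    Msup (⇑θ.symm) σ τ (ℓ + 1) (θ ω) = Msup (⇑θ.symm) σ τ ℓ ω - τ ω := by
  have hrange : (Set.range fun k : {k : ℕ // ℓ + 1 ≤ k} => Zterm (⇑θ.symm) σ τ (k : ℕ) (θ ω))
      = Set.range fun k : {k : ℕ // ℓ ≤ k} => (Zterm (⇑θ.symm) σ τ (k : ℕ) ω - τ ω) := by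
    ext x
    constructor
    · rintro ⟨⟨k, hk⟩, rfl⟩
      obtain ⟨m, rfl⟩ : ∃ m, k = m + 1 := ⟨k - 1, by omega⟩
      exact ⟨⟨m, by omega⟩, (Zterm_shift θ m).symm⟩
    · rintro ⟨⟨m, hm⟩, rfl⟩
      exact ⟨⟨m + 1, by omega⟩, Zterm_shift θ m⟩
  have h1 : Msup (⇑θ.symm) σ τ (ℓ + 1) (θ ω)
      = ⨆ k : {k : ℕ // ℓ ≤ k}, (Zterm (⇑θ.symm) σ τ (k : ℕ) ω - τ ω) := by
    rw [Msup, iSup, iSup, hrange]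
  rw [h1]
  exact (Monotone.map_ciSup_of_continuousAt
    ((continuous_id.sub continuous_const).continuousAt)
    (fun a b hab => by simpa using sub_le_sub_right hab (τ ω) : Monotone fun x : ℝ => x - τ ω) (bdd_sub hb ℓ)).symm

lemma Zfam_shift_succ [MeasurableSpace Ω] (θ : Ω ≃ᵐ Ω) (hb : BddAbove (Set.range fun k : ℕ => Zterm (⇑θ.symm) σ τ k ω))
    (hτ : 0 ≤ τ ω) (ℓ : ℕ) :
    Zfam (⇑θ.symm) σ τ (ℓ + 1) (θ ω) = pos (Zfam (⇑θ.symm) σ τ ℓ ω - τ ω) := by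
  rw [Zfam_eq, Zfam_eq, Msup_shift θ hb ℓ, pos_sub_pos hτ]

lemma Zfam_top_shift [MeasurableSpace Ω] (θ : Ω ≃ᵐ Ω) (hb : BddAbove (Set.range fun k : ℕ => Zterm (⇑θ.symm) σ τ k ω))
    (hσ : 0 ≤ σ ω) (hτ : 0 ≤ τ ω) :
    Zfam (⇑θ.symm) σ τ 1 (θ ω) = pos (max (Zfam (⇑θ.symm) σ τ 1 ω) (σ ω) - τ ω) := by
  have h0 : (1 : ℕ) = 0 + 1 := rfl
  rw [Zfam_eq, Zfam_eq, h0, Msup_shift θ hb 0, Msup_zero hb]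
  congr 2
  unfold pos
  rw [max_assoc, max_comm (0:ℝ) (σ ω), max_eq_left hσ, max_comm]

lemma Zfam_nonneg (T : Ω → Ω) (ℓ : ℕ) (ω : Ω) : 0 ≤ Zfam T σ τ ℓ ω := pos_nonneg _

end Msup


section MET

variable [MeasurableSpace Ω] {μ : MeasureTheory.Measure Ω} [MeasureTheory.IsProbabilityMeasure μ]

open MeasureTheory Filter

lemma ae_iterate {T : Ω → Ω} (hT : MeasurePreserving T μ μ) {P : Ω → Prop}
    (h : ∀ᵐ ω ∂μ, P ω) : ∀ᵐ ω ∂μ, ∀ n : ℕ, P (T^[n] ω) := by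
  rw [ae_all_iff]
  intro n
  exact ae_iff.mpr ((hT.iterate n).quasiMeasurePreserving.preimage_null (ae_iff.mp h))

lemma bddAbove_range_iff_nat (f : ℕ → ℝ) :
    BddAbove (Set.range f) ↔ ∃ C : ℕ, ∀ k, f k ≤ (C : ℝ) := by
  constructor
  · rintro ⟨c, hc⟩
    exact ⟨⌈c⌉₊, fun k => (hc (Set.mem_range_self k)).trans (Nat.le_ceil c)⟩
  · rintro ⟨C, hC⟩
    refine ⟨C, ?_⟩
    rintro x ⟨k, rfl⟩
    exact hC k

lemma integrable_comp_iterate (e : Ω ≃ᵐ Ω) (hmp : MeasureTheory.MeasurePreserving (⇑e) μ μ)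
    (f : Ω → ℝ) (hf : MeasureTheory.Integrable f μ) :
    ∀ i : ℕ, MeasureTheory.Integrable (fun ω => f ((⇑e)^[i] ω)) μ := by
  intro i
  induction i with
  | zero => exact hf
  | succ i ih =>
    have h2 : MeasureTheory.Integrable (fun ω => f ((⇑e)^[i] (e ω))) μ :=
      (hmp.integrable_comp_emb e.measurableEmbedding).mpr ih
    have h3 : (fun ω => f ((⇑e)^[i] (e ω))) = fun ω => f ((⇑e)^[i + 1] ω) := by
      funext ω
      rw [Function.iterate_succ_apply]
    exact h3 ▸ h2

/-- Hopf-Garsia style consequence: partial sums of an ergodic stationary sequence with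
negative mean are a.s. bounded above. -/
theorem bddAbove_partial_sums (θ : Ω ≃ᵐ Ω) (herg : Ergodic (⇑θ) μ) (h : Ω → ℝ)
    (hmeas : Measurable h) (hint : Integrable h μ) (hneg : ∫ ω, h ω ∂μ < 0) :
    ∀ᵐ ω ∂μ, BddAbove (Set.range fun k : ℕ => Tsum (⇑θ.symm) h k ω) := by
  set T : Ω → Ω := ⇑θ.symm with hTdef
  have hTmeas : Measurable T := θ.symm.measurable
  have hTmp : MeasurePreserving T μ μ := MeasurePreserving.symm θ herg.toMeasurePreserving
  set g : Ω → ℝ := fun ω => h (T ω) with hgdef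
  have hgmeas : Measurable g := hmeas.comp hTmeas
  have hgint : Integrable g μ := (hTmp.integrable_comp_emb θ.symm.measurableEmbedding).mpr hint
  have hgint' : ∫ ω, g ω ∂μ = ∫ ω, h ω ∂μ :=
    hTmp.integral_comp θ.symm.measurableEmbedding h
  set B : ℕ → Ω → ℝ := fun k => Tsum T h k with hBdef
  have hBmeas : ∀ k, Measurable (B k) :=
    fun k => Finset.measurable_sum _ fun i _ => hmeas.comp (hTmeas.iterate i)
  have hBint : ∀ k, Integrable (B k) μ :=
    fun k => integrable_finset_sum _ fun i _ => integrable_comp_iterate θ.symm hTmp h hint i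
  have hBzero : ∀ ω, B 0 ω = 0 := fun ω => by simp [hBdef, Tsum]
  have hBshift : ∀ k ω, B (k + 1) ω = g ω + B k (T ω) := fun k ω => Tsum_succ T h k ω
  set M : ℕ → Ω → ℝ :=
    fun n => Nat.rec (B 0) (fun n Mn => fun ω => max (B (n + 1) ω) (Mn ω)) n with hMdef
  have hMzero : ∀ ω, M 0 ω = B 0 ω := fun ω => rfl
  have hMsucc : ∀ n ω, M (n + 1) ω = max (B (n + 1) ω) (M n ω) := fun n ω => rfl
  have hMle : ∀ n k, k ≤ n → ∀ ω, B k ω ≤ M n ω := by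
    intro n
    induction n with
    | zero =>
      intro k hk ω
      rw [Nat.le_zero.mp hk, hMzero]
    | succ n ih =>
      intro k hk ω
      rw [hMsucc]
      rcases Nat.lt_or_ge k (n + 1) with hlt | hge
      · exact (ih k (by omega) ω).trans (le_max_right _ _)
      · have : k = n + 1 := by omega
        subst this
        exact le_max_left _ _
  have hMcases : ∀ n ω, ∃ k, k ≤ n ∧ M n ω = B k ω := by
    intro n ω
    induction n with
    | zero => exact ⟨0, le_rfl, hMzero ω⟩
    | succ n ih =>
      obtain ⟨k, hk, hke⟩ := ih
      rcases max_cases (B (n + 1) ω) (M n ω) with ⟨hmax, _⟩ | ⟨hmax, _⟩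
      · exact ⟨n + 1, le_rfl, by rw [hMsucc, hmax]⟩
      · exact ⟨k, by omega, by rw [hMsucc, hmax, hke]⟩
  have hMnonneg : ∀ n ω, 0 ≤ M n ω := by
    intro n ω
    have := hMle n 0 (Nat.zero_le n) ω
    rw [hBzero] at this
    exact this
  have hMmeas : ∀ n, Measurable (M n) := by
    intro n
    induction n with
    | zero => rw [show M 0 = B 0 from funext hMzero]; exact hBmeas 0
    | succ n ih =>
      rw [show M (n + 1) = fun ω => max (B (n + 1) ω) (M n ω) from funext (hMsucc n)]
      exact (hBmeas (n + 1)).max ih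
  have hMint : ∀ n, Integrable (M n) μ := by
    intro n
    induction n with
    | zero => rw [show M 0 = B 0 from funext hMzero]; exact hBint 0
    | succ n ih =>
      have : Integrable (B (n + 1) ⊔ M n) μ := (hBint (n + 1)).sup ih
      exact this.congr (Filter.Eventually.of_forall fun ω => (hMsucc n ω).symm)
  set A : ℕ → Set Ω := fun n => {ω | 0 < M n ω} with hAdef
  have hAmeas : ∀ n, MeasurableSet (A n) := fun n => measurableSet_lt measurable_const (hMmeas n)
  have hMTint : ∀ n, Integrable (fun ω => M n (T ω)) μ :=
    fun n => (hTmp.integrable_comp_emb θ.symm.measurableEmbedding).mpr (hMint n)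
  have key : ∀ n, 0 ≤ ∫ ω in A n, g ω ∂μ := by
    intro n
    have hpoint : ∀ ω ∈ A n, M n ω - M n (T ω) ≤ g ω := by
      intro ω hω
      obtain ⟨k, hk, hke⟩ := hMcases n ω
      match k, hk, hke with
      | 0, hk, hke =>
        exfalso
        have h0 : 0 < M n ω := hω
        rw [hke, hBzero] at h0
        exact lt_irrefl 0 h0
      | k + 1, hk, hke =>
        have h2 : B k (T ω) ≤ M n (T ω) := hMle n k (by omega) (T ω)
        have h1 : B (k + 1) ω = g ω + B k (T ω) := hBshift k ω
        linarith [hke, h1, h2]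
    have hint1 : IntegrableOn (fun ω => M n ω - M n (T ω)) (A n) μ :=
      ((hMint n).sub (hMTint n)).integrableOn
    have hle : ∫ ω in A n, (M n ω - M n (T ω)) ∂μ ≤ ∫ ω in A n, g ω ∂μ :=
      setIntegral_mono_on hint1 hgint.integrableOn (hAmeas n) hpoint
    have hsplit : ∫ ω in A n, (M n ω - M n (T ω)) ∂μ
        = ∫ ω in A n, M n ω ∂μ - ∫ ω in A n, M n (T ω) ∂μ :=
      integral_sub (hMint n).integrableOn (hMTint n).integrableOn
    have hA1 : ∫ ω in A n, M n ω ∂μ = ∫ ω, M n ω ∂μ := by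
      have hcompl : ∫ ω in (A n)ᶜ, M n ω ∂μ = 0 := by
        rw [setIntegral_congr_fun (hAmeas n).compl
          (fun ω hω => le_antisymm (not_lt.mp hω) (hMnonneg n ω) : Set.EqOn (M n) 0 (A n)ᶜ)]
        simp
      have := integral_add_compl (hAmeas n) (hMint n)
      linarith
    have hA2 : ∫ ω in A n, M n (T ω) ∂μ ≤ ∫ ω, M n (T ω) ∂μ :=
      setIntegral_le_integral (hMTint n) (Filter.Eventually.of_forall fun ω => hMnonneg n (T ω))
    have hTint : ∫ ω, M n (T ω) ∂μ = ∫ ω, M n ω ∂μ :=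
      hTmp.integral_comp θ.symm.measurableEmbedding (M n)
    linarith
  set Abad : Set Ω := {ω | ¬ BddAbove (Set.range fun k : ℕ => B k ω)} with hAbaddef
  have hAbadmeas : MeasurableSet Abad := by
    have hAbadeq : Abad = (⋃ C : ℕ, ⋂ k : ℕ, {ω | B k ω ≤ (C : ℝ)})ᶜ := by
      ext ω
      simp only [hAbaddef, Set.mem_setOf_eq, Set.mem_compl_iff, Set.mem_iUnion, Set.mem_iInter]
      rw [bddAbove_range_iff_nat]
    rw [hAbadeq]
    exact (MeasurableSet.iUnion fun C =>
      MeasurableSet.iInter fun k => measurableSet_le (hBmeas k) measurable_const).compl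
  have hBtheta : ∀ k ω, B (k + 1) (θ ω) = h ω + B k ω := by
    intro k ω
    have := hBshift k (θ ω)
    rw [this]
    simp [hgdef, hTdef, θ.symm_apply_apply]
  have hinv : (⇑θ) ⁻¹' Abad = Abad := by
    ext ω
    simp only [Set.mem_preimage, hAbaddef, Set.mem_setOf_eq]
    apply not_congr
    constructor
    · rintro ⟨c, hc⟩
      refine ⟨c - h ω, ?_⟩
      rintro x ⟨k, rfl⟩
      show B k ω ≤ c - h ω
      have hub : B (k + 1) (θ ω) ≤ c := hc (Set.mem_range_self (k + 1))
      rw [hBtheta k ω] at hub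
      linarith
    · rintro ⟨c, hc⟩
      refine ⟨max 0 (h ω + c), ?_⟩
      rintro x ⟨k, rfl⟩
      show B k (θ ω) ≤ max 0 (h ω + c)
      match k with
      | 0 => rw [hBzero]; exact le_max_left _ _
      | k + 1 =>
        rw [hBtheta k ω]
        have hub : B k ω ≤ c := hc (Set.mem_range_self k)
        exact le_trans (by linarith) (le_max_right _ _)
  rcases herg.toPreErgodic.ae_empty_or_univ hAbadmeas hinv with hempty | huniv
  · exact ae_iff.mpr (ae_eq_empty.mp hempty)
  · exfalso
    have hFull : ∀ᵐ ω ∂μ, ω ∈ Abad := ae_iff.mpr (ae_eq_univ.mp huniv)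
    have hmem : ∀ᵐ ω ∂μ, ∀ᶠ n in atTop, (A n).indicator g ω = g ω := by
      filter_upwards [hFull] with ω hω
      have : ∃ k, 0 < B k ω := by
        by_contra hcon
        push_neg at hcon
        exact hω ⟨0, by rintro x ⟨k, rfl⟩; exact hcon k⟩
      obtain ⟨k, hk⟩ := this
      have hAmono : ∀ m, k ≤ m → ω ∈ A m := by
        intro m hm
        induction m with
        | zero =>
          have hk0 : k = 0 := Nat.le_zero.mp hm
          subst hk0
          show (0:ℝ) < M 0 ω
          rw [hMzero]; exact hk
        | succ m ih =>
          rcases Nat.lt_or_ge k (m + 1) with hlt | hge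
          · have hmem' : ω ∈ A m := ih (by omega)
            show 0 < M (m + 1) ω
            rw [hMsucc]
            exact lt_max_of_lt_right hmem'
          · have : k = m + 1 := by omega
            subst this
            show 0 < M (m+1) ω
            rw [hMsucc]
            exact lt_max_of_lt_left hk
      rw [Filter.eventually_atTop]
      exact ⟨k, fun m hm => Set.indicator_of_mem (hAmono m hm) g⟩
    have hDCT : Filter.Tendsto (fun n => ∫ ω, (A n).indicator g ω ∂μ) atTop (nhds (∫ ω, g ω ∂μ)) := by
      apply MeasureTheory.tendsto_integral_of_dominated_convergence (fun ω => |g ω|)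
      · exact fun n => (hgmeas.indicator (hAmeas n)).aestronglyMeasurable
      · exact hgint.abs
      · intro n
        filter_upwards with ω
        rw [Real.norm_eq_abs]
        by_cases hmem' : ω ∈ A n
        · rw [Set.indicator_of_mem hmem']
        · rw [Set.indicator_of_notMem hmem']
          simp [abs_nonneg]
      · filter_upwards [hmem] with ω hω
        exact Filter.Tendsto.congr' (hω.mono fun n hn => hn.symm) tendsto_const_nhds
    have hge : 0 ≤ ∫ ω, g ω ∂μ := by
      apply ge_of_tendsto hDCT
      filter_upwards with n
      rw [integral_indicator (hAmeas n)]
      exact key n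
    rw [hgint'] at hge
    linarith

lemma integral_tau_pos {τ : Ω → ℝ} (hτint : MeasureTheory.Integrable τ μ)
    (hτ0 : ∀ᵐ ω ∂μ, 0 < τ ω) : 0 < ∫ ω, τ ω ∂μ := by
  rw [MeasureTheory.integral_pos_iff_support_of_nonneg_ae
    (hτ0.mono fun ω h => le_of_lt h) hτint]
  have hsub : {ω | 0 < τ ω} ⊆ Function.support τ := fun ω h => ne_of_gt h
  by_contra hcon
  push_neg at hcon
  have hzero : μ (Function.support τ) = 0 := le_antisymm hcon zero_le
  have h1 : μ {ω | ¬ (0 < τ ω)} = 0 := ae_iff.mp hτ0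
  have h2 : μ {ω | 0 < τ ω} = 0 := measure_mono_null hsub hzero
  have huniv : (Set.univ : Set Ω) ⊆ {ω | 0 < τ ω} ∪ {ω | ¬ (0 < τ ω)} := by
    intro ω _
    by_cases hτω : 0 < τ ω
    · exact Or.inl hτω
    · exact Or.inr hτω
  have : μ Set.univ ≤ 0 := by
    calc μ Set.univ ≤ μ ({ω | 0 < τ ω} ∪ {ω | ¬ (0 < τ ω)}) := measure_mono huniv
    _ ≤ μ {ω | 0 < τ ω} + μ {ω | ¬ (0 < τ ω)} := measure_union_le _ _
    _ = 0 := by rw [h1, h2, add_zero]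
  simp [measure_univ] at this

lemma integrable_posmax {f : Ω → ℝ} (hf : MeasureTheory.Integrable f μ) (a : ℝ) :
    MeasureTheory.Integrable (fun ω => max (f ω - a) 0) μ :=
  ((hf.sub (MeasureTheory.integrable_const a)).sup
    (MeasureTheory.integrable_const 0)).congr (Filter.Eventually.of_forall fun ω => rfl)

theorem bddAbove_Zterm (θ : Ω ≃ᵐ Ω) (herg : Ergodic (⇑θ) μ) (σ τ : Ω → ℝ)
    (hσmeas : Measurable σ) (hτmeas : Measurable τ)
    (hσint : MeasureTheory.Integrable σ μ) (hτint : MeasureTheory.Integrable τ μ)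
    (hσ0 : ∀ᵐ ω ∂μ, 0 ≤ σ ω) (hτ0 : ∀ᵐ ω ∂μ, 0 < τ ω) :
    ∀ᵐ ω ∂μ, BddAbove (Set.range fun k : ℕ => Zterm (⇑θ.symm) σ τ k ω) := by
  have hτpos : 0 < ∫ ω, τ ω ∂μ := integral_tau_pos hτint hτ0
  have hAten : Filter.Tendsto (fun A : ℕ => ∫ ω, max (σ ω - (A : ℝ)) 0 ∂μ) atTop (nhds 0) := by
    have hbound : ∀ A : ℕ, ∀ᵐ ω ∂μ, ‖max (σ ω - (A : ℝ)) 0‖ ≤ |σ ω| := by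
      intro A
      filter_upwards with ω
      rw [Real.norm_eq_abs, abs_of_nonneg (le_max_right _ _)]
      refine max_le ?_ (abs_nonneg _)
      have : (0:ℝ) ≤ A := Nat.cast_nonneg A
      calc σ ω - A ≤ σ ω := by linarith
      _ ≤ |σ ω| := le_abs_self _
    have hlim : ∀ᵐ ω ∂μ, Filter.Tendsto (fun A : ℕ => max (σ ω - (A : ℝ)) 0) atTop (nhds 0) := by
      filter_upwards with ω
      apply Filter.Tendsto.congr' _ tendsto_const_nhds
      rw [Filter.EventuallyEq, Filter.eventually_atTop]
      refine ⟨⌈σ ω⌉₊, fun A hA => ?_⟩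
      rw [max_eq_right]
      have h1 : σ ω ≤ (⌈σ ω⌉₊ : ℝ) := Nat.le_ceil _
      have h2 : ((⌈σ ω⌉₊ : ℕ) : ℝ) ≤ (A : ℝ) := Nat.cast_le.mpr hA
      linarith
    have hDC := MeasureTheory.tendsto_integral_of_dominated_convergence (μ := μ)
      (F := fun (A : ℕ) ω => max (σ ω - (A : ℝ)) 0) (f := fun _ => (0:ℝ)) (fun ω => |σ ω|)
      (fun A => ((hσmeas.sub measurable_const).max measurable_const).aestronglyMeasurable)
      hσint.abs hbound hlim
    simpa using hDC
  obtain ⟨A, hA⟩ : ∃ A : ℕ, ∫ ω, max (σ ω - (A : ℝ)) 0 ∂μ < ∫ ω, τ ω ∂μ :=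
    (hAten.eventually_lt_const hτpos).exists
  set h1 : Ω → ℝ := fun ω => max (σ ω - (A : ℝ)) 0 - τ ω with hh1
  have hb1 : ∀ᵐ ω ∂μ, BddAbove (Set.range fun k : ℕ => Tsum (⇑θ.symm) h1 k ω) := by
    apply bddAbove_partial_sums θ herg h1
      (((hσmeas.sub measurable_const).max measurable_const).sub hτmeas)
      ((integrable_posmax hσint _).sub hτint)
    rw [MeasureTheory.integral_sub (integrable_posmax hσint _) hτint]
    linarith
  filter_upwards [hb1] with ω hb
  obtain ⟨C, hC⟩ := hb
  refine ⟨max (σ ω) ((A : ℝ) + C), ?_⟩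
  rintro x ⟨k, rfl⟩
  show Zterm (⇑θ.symm) σ τ k ω ≤ max (σ ω) ((A : ℝ) + C)
  match k with
  | 0 => rw [Zterm_zero]; exact le_max_left _ _
  | k + 1 =>
    rw [Zterm_eq]
    refine le_trans ?_ (le_max_right _ _)
    have hmem : k + 1 ∈ Finset.Icc 1 (k + 1) := Finset.mem_Icc.mpr ⟨by omega, le_rfl⟩
    have hsingle : max (σ ((⇑θ.symm)^[k+1] ω) - (A:ℝ)) 0
        ≤ ∑ i ∈ Finset.Icc 1 (k+1), max (σ ((⇑θ.symm)^[i] ω) - (A:ℝ)) 0 :=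
      Finset.single_le_sum (f := fun i => max (σ ((⇑θ.symm)^[i] ω) - (A:ℝ)) 0)
        (fun i _ => le_max_right _ _) hmem
    have hsum : Tsum (⇑θ.symm) h1 (k+1) ω
        = (∑ i ∈ Finset.Icc 1 (k+1), max (σ ((⇑θ.symm)^[i] ω) - (A:ℝ)) 0)
          - Tsum (⇑θ.symm) τ (k+1) ω := by
      unfold Tsum
      rw [← Finset.sum_sub_distrib]
    have hCk : Tsum (⇑θ.symm) h1 (k+1) ω ≤ C := hC (Set.mem_range_self (k+1))
    have hσk : σ ((⇑θ.symm)^[k+1] ω) - (A:ℝ) ≤ max (σ ((⇑θ.symm)^[k+1] ω) - (A:ℝ)) 0 :=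
      le_max_left _ _
    linarith

theorem tendsto_Tsum (θ : Ω ≃ᵐ Ω) (herg : Ergodic (⇑θ) μ) (τ : Ω → ℝ)
    (hτmeas : Measurable τ) (hτint : MeasureTheory.Integrable τ μ)
    (hτ0 : ∀ᵐ ω ∂μ, 0 < τ ω) :
    ∀ᵐ ω ∂μ, Filter.Tendsto (fun k : ℕ => Tsum (⇑θ.symm) τ k ω) atTop atTop := by
  have hτpos : 0 < ∫ ω, τ ω ∂μ := integral_tau_pos hτint hτ0
  set c : ℝ := ∫ ω, τ ω ∂μ with hc
  set h2 : Ω → ℝ := fun ω => c / 2 - τ ω with hh2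
  have hb2 : ∀ᵐ ω ∂μ, BddAbove (Set.range fun k : ℕ => Tsum (⇑θ.symm) h2 k ω) := by
    apply bddAbove_partial_sums θ herg h2 (measurable_const.sub hτmeas)
      ((MeasureTheory.integrable_const _).sub hτint)
    rw [MeasureTheory.integral_sub (MeasureTheory.integrable_const _) hτint]
    rw [MeasureTheory.integral_const]
    simp only [measure_univ, probReal_univ, ENNReal.toReal_one, one_smul]
    linarith
  filter_upwards [hb2] with ω hb
  obtain ⟨C, hC⟩ := hb
  have hlow : ∀ k : ℕ, (c / 2) * k + (-C) ≤ Tsum (⇑θ.symm) τ k ω := by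
    intro k
    have hCk : Tsum (⇑θ.symm) h2 k ω ≤ C := hC (Set.mem_range_self k)
    have hsum : Tsum (⇑θ.symm) h2 k ω = (c / 2) * k - Tsum (⇑θ.symm) τ k ω := by
      simp only [Tsum, hh2]
      rw [Finset.sum_sub_distrib, Finset.sum_const, Nat.card_Icc]
      have hk1 : k + 1 - 1 = k := by omega
      rw [hk1, nsmul_eq_mul, mul_comm]
    linarith
  apply tendsto_atTop_mono hlow
  apply Filter.tendsto_atTop_add_const_right
  exact Filter.Tendsto.const_mul_atTop (by linarith) tendsto_natCast_atTop_atTop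

end MET

section Uniq

variable {p : ℕ} (Z' : Ω → Fin p → ℝ) (T : Ω → Ω) (σ τ : Ω → ℝ)

lemma shift_all {P : Ω → Prop} {T : Ω → Ω} {ω : Ω} (H : ∀ n : ℕ, P (T^[n] ω)) :
    ∀ n : ℕ, P (T^[n] (T ω)) := fun n => H (n + 1)

lemma shift_rec {p : ℕ} {Z' : Ω → Fin p → ℝ} {T : Ω → Ω} {σ τ : Ω → ℝ} {ω : Ω}
    (H : ∀ n : ℕ, Z' (T^[n] ω) = Gamma p (σ (T^[n+1] ω)) (τ (T^[n+1] ω)) (Z' (T^[n+1] ω))) :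
    ∀ n : ℕ, Z' (T^[n] (T ω))
      = Gamma p (σ (T^[n+1] (T ω))) (τ (T^[n+1] (T ω))) (Z' (T^[n+1] (T ω))) := fun n =>
  H (n + 1)

lemma lower_bound (hp : 1 ≤ p) : ∀ k : ℕ, ∀ ω : Ω,
    (∀ n : ℕ, Z' (T^[n] ω) = Gamma p (σ (T^[n+1] ω)) (τ (T^[n+1] ω)) (Z' (T^[n+1] ω))) →
    (∀ n : ℕ, 0 < τ (T^[n] ω)) →
    ∀ j : Fin p, p - (j : ℕ) ≤ k → pos (Zterm T σ τ k ω) ≤ Z' ω j := by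
  intro k
  induction k using Nat.strong_induction_on with
  | _ k ih =>
    intro ω Hrec Hτ j hjk
    have hjp : (j : ℕ) < p := j.isLt
    have hk1 : 1 ≤ k := le_trans (by omega) hjk
    obtain ⟨m, rfl⟩ : ∃ m, k = m + 1 := ⟨k - 1, by omega⟩
    have hrec0 : Z' ω = Gamma p (σ (T ω)) (τ (T ω)) (Z' (T ω)) := by
      have h := Hrec 0
      simpa using h
    have Hrec' := shift_rec Hrec
    have Hτ' := shift_all (P := fun x => 0 < τ x) Hτ
    by_cases hj : (j : ℕ) + 1 < p
    · have hΓ : Z' ω j = pos (Z' (T ω) ⟨(j : ℕ) + 1, hj⟩ - τ (T ω)) := by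
        rw [hrec0]; exact dif_pos hj
      rw [hΓ]
      have hIH := ih m (by omega) (T ω) Hrec' Hτ' ⟨(j : ℕ) + 1, hj⟩ (by simp; omega)
      calc pos (Zterm T σ τ (m+1) ω) = pos (Zterm T σ τ m (T ω) - τ (T ω)) := by
            rw [Zterm_succ]
      _ ≤ pos (pos (Zterm T σ τ m (T ω)) - τ (T ω)) :=
            pos_mono (by linarith [le_pos (Zterm T σ τ m (T ω))])
      _ ≤ pos (Z' (T ω) ⟨(j : ℕ) + 1, hj⟩ - τ (T ω)) := pos_mono (by linarith)
    · have hΓ : Z' ω j = pos (max (Z' (T ω) j) (σ (T ω)) - τ (T ω)) := by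
        rw [hrec0]; exact dif_neg hj
      rw [hΓ, pos_max_sub]
      match m with
      | 0 =>
        have h1 : Zterm T σ τ 1 ω = σ (T ω) - τ (T ω) := by
          rw [show (1:ℕ) = 0 + 1 from rfl, Zterm_succ, Zterm_zero]
        exact le_trans (le_of_eq (congrArg pos h1)) (le_max_right _ _)
      | m + 1 =>
        have hIH := ih (m + 1) (by omega) (T ω) Hrec' Hτ' j (by omega)
        calc pos (Zterm T σ τ (m+1+1) ω) = pos (Zterm T σ τ (m+1) (T ω) - τ (T ω)) := by
              rw [Zterm_succ]
        _ ≤ pos (pos (Zterm T σ τ (m+1) (T ω)) - τ (T ω)) :=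
              pos_mono (by linarith [le_pos (Zterm T σ τ (m+1) (T ω))])
        _ ≤ pos (Z' (T ω) j - τ (T ω)) := pos_mono (by linarith)
        _ ≤ max (pos (Z' (T ω) j - τ (T ω))) (pos (σ (T ω) - τ (T ω))) := le_max_left _ _

lemma upper_top (hp : 1 ≤ p) : ∀ N : ℕ, ∀ ω : Ω,
    (∀ n : ℕ, Z' (T^[n] ω) = Gamma p (σ (T^[n+1] ω)) (τ (T^[n+1] ω)) (Z' (T^[n+1] ω))) →
    (∀ n : ℕ, 0 < τ (T^[n] ω)) →
    BddAbove (Set.range fun k : ℕ => Zterm T σ τ k ω) →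
    Z' ω ⟨p - 1, by omega⟩ ≤
      max (pos (Z' (T^[N+1] ω) ⟨p - 1, by omega⟩ - Tsum T τ (N+1) ω)) (Zfam T σ τ 1 ω) := by
  have hptop : ¬ ((p - 1 : ℕ) + 1 < p) := by omega
  intro N
  induction N with
  | zero =>
    intro ω Hrec Hτ Hb0
    have hT1 : Tsum T τ (0+1) ω = τ (T^[0+1] ω) := by
      rw [Tsum_succ_top]
      simp [Tsum]
    have h0 : Z' ω ⟨p - 1, by omega⟩
        = max (pos (Z' (T^[0+1] ω) ⟨p - 1, by omega⟩ - τ (T^[0+1] ω)))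
              (pos (σ (T^[0+1] ω) - τ (T^[0+1] ω))) := by
      have hr := Hrec 0
      simp only [Function.iterate_zero_apply] at hr
      rw [hr]
      rw [show Gamma p (σ (T^[0+1] ω)) (τ (T^[0+1] ω)) (Z' (T^[0+1] ω)) ⟨p - 1, by omega⟩
        = pos (max (Z' (T^[0+1] ω) ⟨p - 1, by omega⟩) (σ (T^[0+1] ω)) - τ (T^[0+1] ω))
        from dif_neg hptop]
      rw [pos_max_sub]
    have hZ1 : pos (σ (T^[0+1] ω) - τ (T^[0+1] ω)) = pos (Zterm T σ τ (0+1) ω) := by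
      rw [Zterm_eq, hT1]
    rw [h0, hZ1, ← hT1]
    exact max_le_max le_rfl (pos_mono (le_Msup Hb0 (by omega)))
  | succ N ih =>
    intro ω Hrec Hτ Hb0
    have hτpos : ∀ n : ℕ, (0:ℝ) ≤ τ (T^[n] ω) := fun n => le_of_lt (Hτ n)
    have hIH := ih ω Hrec Hτ Hb0
    refine le_trans hIH (max_le ?_ (le_max_right _ _))
    have hS : (0:ℝ) ≤ Tsum T τ (N+1) ω := Tsum_nonneg hτpos
    have hWN : Z' (T^[N+1] ω) ⟨p - 1, by omega⟩
        = max (pos (Z' (T^[N+1+1] ω) ⟨p - 1, by omega⟩ - τ (T^[N+1+1] ω)))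
              (pos (σ (T^[N+1+1] ω) - τ (T^[N+1+1] ω))) := by
      have hr := Hrec (N+1)
      rw [hr]
      rw [show Gamma p (σ (T^[N+1+1] ω)) (τ (T^[N+1+1] ω)) (Z' (T^[N+1+1] ω)) ⟨p - 1, by omega⟩
        = pos (max (Z' (T^[N+1+1] ω) ⟨p - 1, by omega⟩) (σ (T^[N+1+1] ω)) - τ (T^[N+1+1] ω))
        from dif_neg hptop]
      rw [pos_max_sub]
    have heq : pos (Z' (T^[N+1] ω) ⟨p - 1, by omega⟩ - Tsum T τ (N+1) ω)
        = max (pos (Z' (T^[N+1+1] ω) ⟨p - 1, by omega⟩ - Tsum T τ (N+1+1) ω))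
              (pos (Zterm T σ τ (N+1+1) ω)) := by
      have e1 : Z' (T^[N+1+1] ω) (⟨p - 1, by omega⟩ : Fin p) - Tsum T τ (N+1+1) ω
          = Z' (T^[N+1+1] ω) (⟨p - 1, by omega⟩ : Fin p) - τ (T^[N+1+1] ω)
            - Tsum T τ (N+1) ω := by
        rw [Tsum_succ_top T τ (N+1) ω]
        ring
      have e2 : Zterm T σ τ (N+1+1) ω
          = σ (T^[N+1+1] ω) - τ (T^[N+1+1] ω) - Tsum T τ (N+1) ω := by
        rw [Zterm_eq, Tsum_succ_top T τ (N+1) ω]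
        ring
      rw [hWN, pos_max_sub, pos_sub_pos hS, pos_sub_pos hS, e1, e2]
    rw [heq]
    exact max_le (le_max_left _ _)
      (le_trans (pos_mono (le_Msup Hb0 (by omega))) (le_max_right _ _))

lemma upper_coord (hp : 1 ≤ p) : ∀ m : ℕ, ∀ ω : Ω,
    (∀ n : ℕ, Z' (T^[n] ω) = Gamma p (σ (T^[n+1] ω)) (τ (T^[n+1] ω)) (Z' (T^[n+1] ω))) →
    (∀ n : ℕ, 0 < τ (T^[n] ω)) →
    ∀ j : Fin p, p - 1 - (j : ℕ) = m →
    Z' ω j ≤ pos (Z' (T^[m] ω) ⟨p - 1, by omega⟩ - Tsum T τ m ω) := by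
  intro m
  induction m with
  | zero =>
    intro ω Hrec Hτ j hj
    have hjp : (j : ℕ) < p := j.isLt
    have hjeq : j = ⟨p - 1, by omega⟩ := by
      apply Fin.ext
      simp only []
      omega
    have hT0 : Tsum T τ 0 ω = 0 := by simp [Tsum]
    rw [hjeq, hT0]
    simp only [Function.iterate_zero_apply, sub_zero]
    exact le_pos _
  | succ m ih =>
    intro ω Hrec Hτ j hj
    have hjp : (j : ℕ) < p := j.isLt
    have hjlt : (j : ℕ) + 1 < p := by omega
    have hrec0 : Z' ω = Gamma p (σ (T ω)) (τ (T ω)) (Z' (T ω)) := by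
      have h := Hrec 0
      simpa using h
    have hΓ : Z' ω j = pos (Z' (T ω) ⟨(j : ℕ) + 1, hjlt⟩ - τ (T ω)) := by
      rw [hrec0]; exact dif_pos hjlt
    have hτ1 : (0:ℝ) ≤ τ (T ω) := by
      have := Hτ 1
      simpa using le_of_lt this
    have hIH := ih (T ω) (shift_rec Hrec) (shift_all (P := fun x => 0 < τ x) Hτ) ⟨(j : ℕ) + 1, hjlt⟩ (by simp; omega)
    rw [hΓ]
    calc pos (Z' (T ω) ⟨(j : ℕ) + 1, hjlt⟩ - τ (T ω))
        ≤ pos (pos (Z' (T^[m] (T ω)) ⟨p - 1, by omega⟩ - Tsum T τ m (T ω)) - τ (T ω)) :=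
          pos_mono (by linarith)
    _ = pos (Z' (T^[m] (T ω)) ⟨p - 1, by omega⟩ - Tsum T τ m (T ω) - τ (T ω)) :=
          pos_sub_pos hτ1
    _ = pos (Z' (T^[m+1] ω) ⟨p - 1, by omega⟩ - Tsum T τ (m+1) ω) := by
          rw [Tsum_succ, ← Function.iterate_succ_apply]
          congr 1
          ring

end Uniq

section Chain

variable [MeasurableSpace Ω] (θ : Ω ≃ᵐ Ω) {σ τ : Ω → ℝ}

lemma chain_Zfam : ∀ m : ℕ, ∀ ℓ : ℕ, ∀ ω : Ω,
    (∀ n : ℕ, BddAbove (Set.range fun k : ℕ => Zterm (⇑θ.symm) σ τ k ((⇑θ.symm)^[n] ω))) →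
    (∀ n : ℕ, 0 < τ ((⇑θ.symm)^[n] ω)) →
    pos (Zfam (⇑θ.symm) σ τ ℓ ((⇑θ.symm)^[m] ω) - Tsum (⇑θ.symm) τ m ω)
      ≤ Zfam (⇑θ.symm) σ τ (ℓ + m) ω := by
  intro m
  induction m with
  | zero =>
    intro ℓ ω _ _
    simp only [Function.iterate_zero_apply, Nat.add_zero]
    rw [show Tsum (⇑θ.symm) τ 0 ω = 0 from by simp [Tsum], sub_zero,
      pos_of_nonneg (Zfam_nonneg _ _ _)]
  | succ m ih =>
    intro ℓ ω Hb Hτ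
    have hτ1 : (0:ℝ) ≤ τ (θ.symm ω) := by
      have := Hτ 1
      simpa using le_of_lt this
    have hIH := ih ℓ (θ.symm ω)
      (shift_all (P := fun x => BddAbove (Set.range fun k : ℕ => Zterm (⇑θ.symm) σ τ k x)) Hb)
      (shift_all (P := fun x => 0 < τ x) Hτ)
    have hb1 : BddAbove (Set.range fun k : ℕ => Zterm (⇑θ.symm) σ τ k (θ.symm ω)) := by
      have := Hb 1
      simpa using this
    calc pos (Zfam (⇑θ.symm) σ τ ℓ ((⇑θ.symm)^[m+1] ω) - Tsum (⇑θ.symm) τ (m+1) ω)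
        = pos (Zfam (⇑θ.symm) σ τ ℓ ((⇑θ.symm)^[m] (θ.symm ω)) - Tsum (⇑θ.symm) τ m (θ.symm ω)
            - τ (θ.symm ω)) := by
          rw [Tsum_succ, Function.iterate_succ_apply]
          congr 1
          ring
    _ ≤ pos (pos (Zfam (⇑θ.symm) σ τ ℓ ((⇑θ.symm)^[m] (θ.symm ω))
            - Tsum (⇑θ.symm) τ m (θ.symm ω)) - τ (θ.symm ω)) :=
          pos_mono (by linarith [le_pos (Zfam (⇑θ.symm) σ τ ℓ ((⇑θ.symm)^[m] (θ.symm ω))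
            - Tsum (⇑θ.symm) τ m (θ.symm ω))])
    _ ≤ pos (Zfam (⇑θ.symm) σ τ (ℓ + m) (θ.symm ω) - τ (θ.symm ω)) := pos_mono (by linarith)
    _ = Zfam (⇑θ.symm) σ τ (ℓ + m + 1) (θ (θ.symm ω)) :=
          (Zfam_shift_succ θ hb1 hτ1 (ℓ + m)).symm
    _ = Zfam (⇑θ.symm) σ τ (ℓ + (m + 1)) ω := by
          rw [θ.apply_symm_apply]
          rfl

end Chain

section Freq

variable [MeasurableSpace Ω] {μ : MeasureTheory.Measure Ω} [MeasureTheory.IsProbabilityMeasure μ]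

open MeasureTheory Filter

theorem exists_freq (θ : Ω ≃ᵐ Ω) (herg : Ergodic (⇑θ) μ) (W : Ω → ℝ) (hW : Measurable W) :
    ∃ M : ℕ, ∀ᵐ ω ∂μ, ∃ᶠ n in atTop, W ((⇑θ.symm)^[n] ω) ≤ (M : ℝ) := by
  have hTmeas : Measurable (⇑θ.symm) := θ.symm.measurable
  have hTmp : MeasurePreserving (⇑θ.symm) μ μ := MeasurePreserving.symm θ herg.toMeasurePreserving
  set B : ℕ → Set Ω := fun M => {ω | ∀ N : ℕ, ∃ n, N ≤ n ∧ W ((⇑θ.symm)^[n] ω) ≤ (M:ℝ)}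
    with hBdef
  have hBmeas : ∀ M, MeasurableSet (B M) := by
    intro M
    have hBeq : B M = ⋂ N : ℕ, ⋃ n : ℕ, ⋃ (_ : N ≤ n), {ω | W ((⇑θ.symm)^[n] ω) ≤ (M:ℝ)} := by
      ext ω
      simp only [hBdef, Set.mem_setOf_eq, Set.mem_iInter, Set.mem_iUnion]
      constructor
      · intro h N
        obtain ⟨n, hn, hWn⟩ := h N
        exact ⟨n, hn, hWn⟩
      · intro h N
        obtain ⟨n, hn, hWn⟩ := h N
        exact ⟨n, hn, hWn⟩
    rw [hBeq]
    exact MeasurableSet.iInter fun N => MeasurableSet.iUnion fun n =>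
      MeasurableSet.iUnion fun _ =>
        measurableSet_le (hW.comp (hTmeas.iterate n)) measurable_const
  suffices hsuff : ∃ M : ℕ, μ (B M) = 1 by
    obtain ⟨M, hM⟩ := hsuff
    refine ⟨M, ?_⟩
    have hcompl : μ (B M)ᶜ = 0 := by
      rw [measure_compl (hBmeas M) (measure_ne_top μ _), measure_univ, hM, tsub_self]
    have hae : ∀ᵐ ω ∂μ, ω ∈ B M := ae_iff.mpr hcompl
    filter_upwards [hae] with ω hω
    rw [Filter.frequently_atTop]
    intro a
    obtain ⟨n, hn, hWn⟩ := hω a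
    exact ⟨n, hn, hWn⟩
  have hinv : ∀ M, (⇑θ) ⁻¹' (B M) = B M := by
    intro M
    ext ω
    simp only [hBdef, Set.mem_preimage, Set.mem_setOf_eq]
    constructor
    · intro h N
      obtain ⟨n, hn, hWn⟩ := h (N + 1)
      obtain ⟨c, rfl⟩ : ∃ c, n = c + 1 := ⟨n - 1, by omega⟩
      refine ⟨c, by omega, ?_⟩
      have he : (⇑θ.symm)^[c+1] (θ ω) = (⇑θ.symm)^[c] ω := by
        rw [Function.iterate_succ_apply]
        congr 1
        exact θ.symm_apply_apply ω
      rwa [he] at hWn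
    · intro h N
      obtain ⟨n, hn, hWn⟩ := h N
      refine ⟨n + 1, by omega, ?_⟩
      have he : (⇑θ.symm)^[n+1] (θ ω) = (⇑θ.symm)^[n] ω := by
        rw [Function.iterate_succ_apply]
        congr 1
        exact θ.symm_apply_apply ω
      rwa [he]
  by_contra hcon
  push_neg at hcon
  have hnull : ∀ M, μ (B M) = 0 := by
    intro M
    rcases herg.toPreErgodic.ae_empty_or_univ (hBmeas M) (hinv M) with he | hu
    · exact ae_eq_empty.mp he
    · exact absurd (by rw [measure_congr hu, measure_univ]) (hcon M)
  have hM0 : ∃ M : ℕ, 0 < μ {ω | W ω ≤ (M:ℝ)} := by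
    by_contra hc
    push_neg at hc
    have hz : ∀ M : ℕ, μ {ω | W ω ≤ (M:ℝ)} = 0 := fun M => le_antisymm (hc M) zero_le
    have huniv : (Set.univ : Set Ω) ⊆ ⋃ M : ℕ, {ω | W ω ≤ (M:ℝ)} := by
      intro ω _
      obtain ⟨n, hn⟩ := exists_nat_ge (W ω)
      exact Set.mem_iUnion.mpr ⟨n, hn⟩
    have hbad : μ Set.univ ≤ ∑' M : ℕ, μ {ω | W ω ≤ (M:ℝ)} :=
      le_trans (measure_mono huniv) (measure_iUnion_le _)
    rw [measure_univ] at hbad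
    simp [hz] at hbad
  obtain ⟨M₀, hM₀⟩ := hM0
  set A : ℕ → Set Ω := fun n => (⇑θ.symm)^[n] ⁻¹' {ω | W ω ≤ (M₀:ℝ)} with hAdef
  have hWset : MeasurableSet {ω | W ω ≤ (M₀:ℝ)} := measurableSet_le hW measurable_const
  have hAmeas : ∀ n, MeasurableSet (A n) := fun n => (hTmeas.iterate n) hWset
  have hApre : ∀ n, μ (A n) = μ {ω | W ω ≤ (M₀:ℝ)} := fun n =>
    (hTmp.iterate n).measure_preimage hWset.nullMeasurableSet
  set U : ℕ → Set Ω := fun N => ⋃ n, ⋃ (_ : N ≤ n), A n with hUdef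
  have hUmeas : ∀ N, MeasurableSet (U N) :=
    fun N => MeasurableSet.iUnion fun n => MeasurableSet.iUnion fun _ => hAmeas n
  have hBU : B M₀ = ⋂ N, U N := by
    ext ω
    simp only [hBdef, hUdef, hAdef, Set.mem_setOf_eq, Set.mem_iInter, Set.mem_iUnion,
      Set.mem_preimage]
    constructor
    · intro h N
      obtain ⟨n, hn, hWn⟩ := h N
      exact ⟨n, hn, hWn⟩
    · intro h N
      obtain ⟨n, hn, hWn⟩ := h N
      exact ⟨n, hn, hWn⟩
  have hanti : Antitone U := by
    intro N N' hNN' ω hω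
    simp only [hUdef, Set.mem_iUnion] at hω ⊢
    obtain ⟨n, hn, hmem⟩ := hω
    exact ⟨n, le_trans hNN' hn, hmem⟩
  have hiInf : μ (⋂ N, U N) = ⨅ N, μ (U N) :=
    Antitone.measure_iInter hanti (fun N => (hUmeas N).nullMeasurableSet)
      ⟨0, measure_ne_top μ _⟩
  have hlow : μ {ω | W ω ≤ (M₀:ℝ)} ≤ μ (B M₀) := by
    rw [hBU, hiInf]
    refine le_iInf fun N => ?_
    calc μ {ω | W ω ≤ (M₀:ℝ)} = μ (A N) := (hApre N).symm
    _ ≤ μ (U N) := measure_mono (fun ω h => Set.mem_iUnion.mpr ⟨N, Set.mem_iUnion.mpr ⟨le_rfl, h⟩⟩)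
  rw [hnull M₀] at hlow
  exact absurd hlow (not_le.mpr hM₀)

end Freq

section Congr

lemma Zterm_congr {T : Ω → Ω} {σ τ σ' τ' : Ω → ℝ} {ω : Ω}
    (h : ∀ n : ℕ, σ (T^[n] ω) = σ' (T^[n] ω) ∧ τ (T^[n] ω) = τ' (T^[n] ω)) (m k : ℕ) :
    Zterm T σ τ k (T^[m] ω) = Zterm T σ' τ' k (T^[m] ω) := by
  unfold Zterm
  have hiter : ∀ i : ℕ, T^[i] (T^[m] ω) = T^[i+m] ω :=
    fun i => (Function.iterate_add_apply T i m ω).symm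
  rw [hiter k, (h (k+m)).1, ← hiter k]
  congr 1
  apply Finset.sum_congr rfl
  intro i _
  rw [hiter i, (h (i+m)).2, ← hiter i]

lemma Tsum_congr {T : Ω → Ω} {τ τ' : Ω → ℝ} {ω : Ω}
    (h : ∀ n : ℕ, τ (T^[n] ω) = τ' (T^[n] ω)) (k : ℕ) :
    Tsum T τ k ω = Tsum T τ' k ω := by
  unfold Tsum
  exact Finset.sum_congr rfl fun i _ => h i

lemma shift_all_iter {P : Ω → Prop} {T : Ω → Ω} :
    ∀ (m : ℕ) {ω : Ω}, (∀ n : ℕ, P (T^[n] ω)) → ∀ n : ℕ, P (T^[n] (T^[m] ω)) := by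
  intro m
  induction m with
  | zero => intro ω H; exact H
  | succ m ih => intro ω H; exact ih (shift_all H)

lemma shift_rec_iter {p : ℕ} {Z' : Ω → Fin p → ℝ} {T : Ω → Ω} {σ τ : Ω → ℝ} :
    ∀ (m : ℕ) {ω : Ω},
    (∀ n : ℕ, Z' (T^[n] ω) = Gamma p (σ (T^[n+1] ω)) (τ (T^[n+1] ω)) (Z' (T^[n+1] ω))) →
    ∀ n : ℕ, Z' (T^[n] (T^[m] ω))
      = Gamma p (σ (T^[n+1] (T^[m] ω))) (τ (T^[n+1] (T^[m] ω))) (Z' (T^[n+1] (T^[m] ω))) := by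
  intro m
  induction m with
  | zero => intro ω H; exact H
  | succ m ih => intro ω H; exact ih (shift_rec H)

end Congr

end SQ
end SQ

open SQ

theorem stmt4 {Ω : Type*} [MeasurableSpace Ω] (μ : MeasureTheory.Measure Ω)
    [MeasureTheory.IsProbabilityMeasure μ]
    (θ : Ω ≃ᵐ Ω) (hergo : Ergodic (⇑θ) μ)
    (σ τ : Ω → ℝ) (hσint : MeasureTheory.Integrable σ μ) (hτint : MeasureTheory.Integrable τ μ)
    (hσ0 : ∀ᵐ ω ∂μ, 0 ≤ σ ω) (hτ0 : ∀ᵐ ω ∂μ, 0 < τ ω)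
    (p : ℕ) (hp : 1 ≤ p) :
    (∀ᵐ ω ∂μ, ∀ i : Fin p,
      BddAbove (Set.range fun k : {k : ℕ // p - (i : ℕ) ≤ k} => Zterm (⇑θ.symm) σ τ (k : ℕ) ω)) ∧
    (∀ᵐ ω ∂μ, OSorted fun i : Fin p => Zfam (⇑θ.symm) σ τ (p - (i : ℕ)) ω) ∧
    (∀ᵐ ω ∂μ, (fun i : Fin p => Zfam (⇑θ.symm) σ τ (p - (i : ℕ)) (θ ω)) =
      Gamma p (σ ω) (τ ω) fun i : Fin p => Zfam (⇑θ.symm) σ τ (p - (i : ℕ)) ω) ∧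
    (∀ Z' : Ω → Fin p → ℝ, Measurable Z' → (∀ᵐ ω ∂μ, OSorted (Z' ω)) →
      (∀ᵐ ω ∂μ, Z' (θ ω) = Gamma p (σ ω) (τ ω) (Z' ω)) →
      ∀ᵐ ω ∂μ, Z' ω = fun i : Fin p => Zfam (⇑θ.symm) σ τ (p - (i : ℕ)) ω) := by
  have hTmp : MeasureTheory.MeasurePreserving (⇑θ.symm) μ μ :=
    MeasureTheory.MeasurePreserving.symm θ hergo.toMeasurePreserving
  have hσae : AEMeasurable σ μ := hσint.aemeasurable
  have hτae : AEMeasurable τ μ := hτint.aemeasurable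
  set σ' := hσae.mk σ with hσ'def
  set τ' := hτae.mk τ with hτ'def
  have hσ'meas : Measurable σ' := hσae.measurable_mk
  have hτ'meas : Measurable τ' := hτae.measurable_mk
  have hσeq : σ =ᵐ[μ] σ' := hσae.ae_eq_mk
  have hτeq : τ =ᵐ[μ] τ' := hτae.ae_eq_mk
  have hσ'int : MeasureTheory.Integrable σ' μ := hσint.congr hσeq
  have hτ'int : MeasureTheory.Integrable τ' μ := hτint.congr hτeq
  have hσ'0 : ∀ᵐ ω ∂μ, 0 ≤ σ' ω := by
    filter_upwards [hσ0, hσeq] with ω h1 h2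
    rw [← h2]; exact h1
  have hτ'0 : ∀ᵐ ω ∂μ, 0 < τ' ω := by
    filter_upwards [hτ0, hτeq] with ω h1 h2
    rw [← h2]; exact h1
  have hBdd' : ∀ᵐ ω ∂μ, BddAbove (Set.range fun k : ℕ => Zterm (⇑θ.symm) σ' τ' k ω) :=
    bddAbove_Zterm θ hergo σ' τ' hσ'meas hτ'meas hσ'int hτ'int hσ'0 hτ'0
  have hTend' : ∀ᵐ ω ∂μ, Filter.Tendsto (fun k : ℕ => Tsum (⇑θ.symm) τ' k ω) Filter.atTop
      Filter.atTop := tendsto_Tsum θ hergo τ' hτ'meas hτ'int hτ'0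
  have hagree : ∀ᵐ ω ∂μ, ∀ n : ℕ,
      (σ ((⇑θ.symm)^[n] ω) = σ' ((⇑θ.symm)^[n] ω)
        ∧ τ ((⇑θ.symm)^[n] ω) = τ' ((⇑θ.symm)^[n] ω))
      ∧ 0 ≤ σ ((⇑θ.symm)^[n] ω) ∧ 0 < τ ((⇑θ.symm)^[n] ω) := by
    apply ae_iterate (P := fun x => (σ x = σ' x ∧ τ x = τ' x) ∧ 0 ≤ σ x ∧ 0 < τ x) hTmp
    filter_upwards [hσeq, hτeq, hσ0, hτ0] with ω h1 h2 h3 h4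
    exact ⟨⟨h1, h2⟩, h3, h4⟩
  have hBddAll' : ∀ᵐ ω ∂μ, ∀ n : ℕ,
      BddAbove (Set.range fun k : ℕ => Zterm (⇑θ.symm) σ' τ' k ((⇑θ.symm)^[n] ω)) :=
    ae_iterate (P := fun x => BddAbove (Set.range fun k : ℕ => Zterm (⇑θ.symm) σ' τ' k x))
      hTmp hBdd'
  have hBddAll : ∀ᵐ ω ∂μ, ∀ n : ℕ,
      BddAbove (Set.range fun k : ℕ => Zterm (⇑θ.symm) σ τ k ((⇑θ.symm)^[n] ω)) := by
    filter_upwards [hBddAll', hagree] with ω hB hA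
    intro n
    have hfun : (fun k : ℕ => Zterm (⇑θ.symm) σ τ k ((⇑θ.symm)^[n] ω))
        = fun k : ℕ => Zterm (⇑θ.symm) σ' τ' k ((⇑θ.symm)^[n] ω) := by
      funext k
      exact Zterm_congr (fun n => (hA n).1) n k
    rw [hfun]
    exact hB n
  have hTendστ : ∀ᵐ ω ∂μ, Filter.Tendsto (fun k : ℕ => Tsum (⇑θ.symm) τ k ω) Filter.atTop
      Filter.atTop := by
    filter_upwards [hTend', hagree] with ω hT hA
    have hfun : (fun k : ℕ => Tsum (⇑θ.symm) τ k ω) = fun k : ℕ => Tsum (⇑θ.symm) τ' k ω := by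
      funext k
      exact Tsum_congr (fun n => ((hA n).1).2) k
    rw [hfun]
    exact hT
  refine ⟨?_, ?_, ?_, ?_⟩
  · -- Part 1
    filter_upwards [hBddAll] with ω hB
    intro i
    exact bdd_sub (hB 0) (p - (i : ℕ))
  · -- Part 2
    filter_upwards [hBddAll] with ω hB
    have hb0 : BddAbove (Set.range fun k : ℕ => Zterm (⇑θ.symm) σ τ k ω) := hB 0
    constructor
    · intro i
      exact pos_nonneg _
    · intro i j hij
      exact pos_mono (Msup_mono hb0 (Nat.sub_le_sub_left hij p))
  · -- Part 3
    filter_upwards [hBddAll, hagree] with ω hB hA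
    have hb0 : BddAbove (Set.range fun k : ℕ => Zterm (⇑θ.symm) σ τ k ω) := hB 0
    have hσω : 0 ≤ σ ω := (hA 0).2.1
    have hτω : 0 ≤ τ ω := le_of_lt (hA 0).2.2
    funext i
    have hip : (i : ℕ) < p := i.isLt
    by_cases hi : (i : ℕ) + 1 < p
    · have hg : Gamma p (σ ω) (τ ω) (fun i : Fin p => Zfam (⇑θ.symm) σ τ (p - (i : ℕ)) ω) i
          = pos (Zfam (⇑θ.symm) σ τ (p - ((i : ℕ) + 1)) ω - τ ω) := dif_pos hi
      have harith : p - (i : ℕ) = (p - ((i : ℕ) + 1)) + 1 := by omega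
      show Zfam (⇑θ.symm) σ τ (p - (i : ℕ)) (θ ω) = _
      rw [hg, harith]
      exact Zfam_shift_succ θ hb0 hτω _
    · have hg : Gamma p (σ ω) (τ ω) (fun i : Fin p => Zfam (⇑θ.symm) σ τ (p - (i : ℕ)) ω) i
          = pos (max (Zfam (⇑θ.symm) σ τ (p - (i : ℕ)) ω) (σ ω) - τ ω) := dif_neg hi
      have harith : p - (i : ℕ) = 1 := by omega
      show Zfam (⇑θ.symm) σ τ (p - (i : ℕ)) (θ ω) = _
      rw [hg, harith]
      exact Zfam_top_shift θ hb0 hσω hτω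
  · -- Part 4 : uniqueness
    intro Z' hZ'meas hZ'OS hZ'rec
    have hWmeas : Measurable (fun ω => Z' ω (⟨p - 1, by omega⟩ : Fin p)) :=
      (measurable_pi_apply _).comp hZ'meas
    obtain ⟨M, hfreq⟩ := exists_freq θ hergo _ hWmeas
    have hrecAll : ∀ᵐ ω ∂μ, ∀ n : ℕ, Z' ((⇑θ.symm)^[n] ω)
        = Gamma p (σ ((⇑θ.symm)^[n+1] ω)) (τ ((⇑θ.symm)^[n+1] ω))
          (Z' ((⇑θ.symm)^[n+1] ω)) := by
      have h2 := ae_iterate (P := fun x => Z' (θ x) = Gamma p (σ x) (τ x) (Z' x)) hTmp hZ'rec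
      filter_upwards [h2] with ω h2ω n
      have h3 := h2ω (n + 1)
      rw [show θ ((⇑θ.symm)^[n+1] ω) = (⇑θ.symm)^[n] ω from by
        rw [Function.iterate_succ_apply']
        exact θ.apply_symm_apply _] at h3
      exact h3
    have hOSAll := ae_iterate (P := fun x => OSorted (Z' x)) hTmp hZ'OS
    filter_upwards [hrecAll, hOSAll, hBddAll, hagree, hTendστ, hfreq]
      with ω Hrec HOS Hb HA Htend Hfreq
    have Hτ : ∀ n : ℕ, 0 < τ ((⇑θ.symm)^[n] ω) := fun n => (HA n).2.2
    funext i
    have hip : (i : ℕ) < p := i.isLt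
    apply le_antisymm
    · -- upper bound
      set m := p - 1 - (i : ℕ) with hm
      have hub1 : Z' ω i ≤ pos (Z' ((⇑θ.symm)^[m] ω) (⟨p - 1, by omega⟩ : Fin p)
          - Tsum (⇑θ.symm) τ m ω) :=
        upper_coord Z' (⇑θ.symm) σ τ hp m ω Hrec Hτ i rfl
      have hev : ∀ᶠ n in Filter.atTop,
          (M : ℝ) + Tsum (⇑θ.symm) τ m ω < Tsum (⇑θ.symm) τ n ω :=
        Htend.eventually_gt_atTop _
      obtain ⟨n, hn, hWn, hTn⟩ := Filter.frequently_atTop.mp (Hfreq.and_eventually hev) (m + 1)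
      set N' := n - m with hN'
      have hTadd : Tsum (⇑θ.symm) τ n ω
          = Tsum (⇑θ.symm) τ m ω + Tsum (⇑θ.symm) τ N' ((⇑θ.symm)^[m] ω) := by
        conv_lhs => rw [show n = N' + m from by omega]
        exact Tsum_add (⇑θ.symm) τ N' m ω
      have hW0 : Z' ((⇑θ.symm)^[N'] ((⇑θ.symm)^[m] ω)) (⟨p - 1, by omega⟩ : Fin p)
          ≤ Tsum (⇑θ.symm) τ N' ((⇑θ.symm)^[m] ω) := by
        have hiter : (⇑θ.symm)^[N'] ((⇑θ.symm)^[m] ω) = (⇑θ.symm)^[n] ω := by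
          rw [← Function.iterate_add_apply]
          congr 1
          omega
        rw [hiter]
        linarith
      have hbm : BddAbove (Set.range fun k : ℕ =>
          Zterm (⇑θ.symm) σ τ k ((⇑θ.symm)^[m] ω)) := Hb m
      have htop := upper_top Z' (⇑θ.symm) σ τ hp (N' - 1) ((⇑θ.symm)^[m] ω)
        (shift_rec_iter m Hrec) (shift_all_iter (P := fun x => 0 < τ x) m Hτ) hbm
      rw [show N' - 1 + 1 = N' from by omega] at htop
      have hzero : pos (Z' ((⇑θ.symm)^[N'] ((⇑θ.symm)^[m] ω)) (⟨p - 1, by omega⟩ : Fin p)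
          - Tsum (⇑θ.symm) τ N' ((⇑θ.symm)^[m] ω)) = 0 :=
        pos_of_nonpos (by linarith)
      rw [hzero, max_eq_right (Zfam_nonneg _ _ _)] at htop
      have hchain := chain_Zfam θ m 1 ω Hb Hτ
      have harith : 1 + m = p - (i : ℕ) := by omega
      calc Z' ω i ≤ pos (Z' ((⇑θ.symm)^[m] ω) (⟨p - 1, by omega⟩ : Fin p)
            - Tsum (⇑θ.symm) τ m ω) := hub1
      _ ≤ pos (Zfam (⇑θ.symm) σ τ 1 ((⇑θ.symm)^[m] ω) - Tsum (⇑θ.symm) τ m ω) :=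
            pos_mono (by linarith)
      _ ≤ Zfam (⇑θ.symm) σ τ (1 + m) ω := hchain
      _ = Zfam (⇑θ.symm) σ τ (p - (i : ℕ)) ω := by rw [harith]
    · -- lower bound
      refine max_le ?_ ((HOS 0).1 i)
      apply Msup_le
      intro k hk
      exact le_trans (le_pos _) (lower_bound Z' (⇑θ.symm) σ τ hp k ω Hrec Hτ i hk)
end

section
/- Let (Ω, F, P, θ) be a stationary ergodic quadruple carrying σ, τ as in the context and let p ≥ 1. If P(Z_1 = 0) > 0, then the solution to the equation Y∘θ = Ψ^p(Y) P-a.s. is unique: any two measurable, almost surely finite Ō_p-valued random vectors Y and Y' satisfying Y∘θ = Ψ^p(Y) a.s. and Y'∘θ = Ψ^p(Y') a.s. coincide almost surely. -/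
open MeasureTheory ProbabilityTheory Filter

namespace StmtAux

open Set Function

/-! ### Elementary real lemmas about `pos` -/

lemma upos_nonneg (x : ℝ) : 0 ≤ pos x := le_max_right x 0

lemma ule_pos (x : ℝ) : x ≤ pos x := le_max_left x 0

lemma upos_mono {x y : ℝ} (h : x ≤ y) : pos x ≤ pos y := max_le_max h le_rfl

lemma upos_lip (x y : ℝ) : |pos x - pos y| ≤ |x - y| := abs_max_sub_max_le_abs x y 0

lemma umax_lip (a b c : ℝ) : |max a c - max b c| ≤ |a - b| := abs_max_sub_max_le_abs a b c

lemma umin_lip (a b c : ℝ) : |min a c - min b c| ≤ |a - b| := by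
  have h := abs_min_sub_min_le_max a c b c
  simpa using h

lemma upos_sub_le {x y : ℝ} (h : y ≤ x) : pos x - pos y ≤ x - y := by
  unfold pos
  rcases le_total y 0 with hy | hy
  · rcases le_total x 0 with hx | hx
    · rw [max_eq_right hx, max_eq_right hy]; linarith
    · rw [max_eq_left hx, max_eq_right hy]; linarith
  · rw [max_eq_left (hy.trans h), max_eq_left hy]

lemma upos_eq_forces {x y : ℝ} (h : |pos x - pos y| = |x - y|) (hne : x ≠ y) :
    0 ≤ x ∧ 0 ≤ y := by
  unfold pos at h
  rcases le_or_gt 0 x with hx | hx <;> rcases le_or_gt 0 y with hy | hy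
  · exact ⟨hx, hy⟩
  · exfalso
    rw [max_eq_left hx, max_eq_right hy.le, sub_zero, abs_of_nonneg hx,
      abs_of_pos (by linarith : 0 < x - y)] at h
    linarith
  · exfalso
    rw [max_eq_right hx.le, max_eq_left hy, zero_sub, abs_neg, abs_of_nonneg hy,
      abs_of_neg (by linarith : x - y < 0)] at h
    linarith
  · exfalso
    rw [max_eq_right hx.le, max_eq_right hy.le, sub_self, abs_zero] at h
    exact hne (sub_eq_zero.mp (abs_eq_zero.mp h.symm))

lemma endgame {v s t : ℝ} (hv : 0 ≤ v) (hs : 0 ≤ s) (ht : 0 < t)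
    (heq : pos (max v s - t) - pos (s - t) = v) : v = 0 := by
  unfold pos at heq
  rcases le_total v s with h2 | h2
  · rw [max_eq_right h2] at heq
    rcases le_total s t with hst | hst
    · rw [max_eq_right (by linarith : s - t ≤ 0), sub_self] at heq
      linarith
    · rw [max_eq_left (by linarith : (0:ℝ) ≤ s - t), sub_self] at heq
      linarith
  · rw [max_eq_left h2] at heq
    rcases le_total s t with hst | hst
    · rw [max_eq_right (by linarith : s - t ≤ 0), sub_zero] at heq
      rcases le_total v t with h1 | h1
      · rw [max_eq_right (by linarith : v - t ≤ 0)] at heq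
        linarith
      · rw [max_eq_left (by linarith : (0:ℝ) ≤ v - t)] at heq
        linarith
    · rw [max_eq_left (by linarith : (0:ℝ) ≤ s - t),
        max_eq_left (by linarith : (0:ℝ) ≤ v - t)] at heq
      linarith

lemma forces_ge {a b s t m : ℝ} (hne : a ≠ b)
    (heq : |pos (min (max a s) m - t) - pos (min (max b s) m - t)| = |a - b|) : t ≤ m := by
  set x := min (max a s) m - t with hx
  set y := min (max b s) m - t with hy
  have h2 : |x - y| = |min (max a s) m - min (max b s) m| := by rw [hx, hy]; ring_nf
  have h3 : |min (max a s) m - min (max b s) m| ≤ |max a s - max b s| := umin_lip _ _ _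
  have h4 : |max a s - max b s| ≤ |a - b| := umax_lip _ _ _
  have hxy : |x - y| = |a - b| := by
    refine le_antisymm (h2 ▸ (h3.trans h4)) ?_
    rw [← heq]; exact upos_lip x y
  have habpos : 0 < |a - b| := abs_pos.mpr (sub_ne_zero.mpr hne)
  have hne' : x ≠ y := by
    intro h
    rw [h, sub_self, abs_zero] at hxy
    linarith
  have hforce := upos_eq_forces (heq.trans hxy.symm) hne'
  have h5 : t ≤ min (max a s) m := by linarith [hforce.1]
  exact h5.trans (min_le_right _ _)


/-! ### Measure-theoretic lemmas -/

variable {Ω : Type*} [MeasurableSpace Ω] {μ : MeasureTheory.Measure Ω}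
  [MeasureTheory.IsProbabilityMeasure μ]

lemma ae_comp {f : Ω → Ω} (hf : MeasurePreserving f μ μ) {P : Ω → Prop}
    (h : ∀ᵐ ω ∂μ, P ω) : ∀ᵐ ω ∂μ, P (f ω) :=
  ae_of_ae_map hf.aemeasurable (by rwa [hf.map_eq])

lemma ae_eq_comp_of_ae_le_comp_meas {f : Ω → Ω} (hf : MeasurePreserving f μ μ) {g : Ω → ℝ}
    (hg : Measurable g) (h : ∀ᵐ ω ∂μ, g (f ω) ≤ g ω) : ∀ᵐ ω ∂μ, g (f ω) = g ω := by
  have key : ∀ q : ℚ, μ ({ω | (q : ℝ) < g ω} \ f ⁻¹' {ω | (q : ℝ) < g ω}) = 0 := by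
    intro q
    set S := {ω | (q : ℝ) < g ω} with hSdef
    have hSm : MeasurableSet S := measurableSet_lt measurable_const hg
    have h1 : μ (f ⁻¹' S \ S) = 0 := by
      refine measure_mono_null ?_ (ae_iff.mp h)
      rintro ω ⟨h2, h3⟩
      simp only [hSdef, mem_preimage, mem_setOf_eq] at h2 h3
      simp only [mem_setOf_eq, not_le]
      exact (not_lt.mp h3).trans_lt h2
    have e1 : μ (f ⁻¹' S) = μ S := hf.measure_preimage hSm.nullMeasurableSet
    have e2 : μ (f ⁻¹' S ∩ S) + μ (f ⁻¹' S \ S) = μ (f ⁻¹' S) := measure_inter_add_diff _ hSm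
    have e3 : μ (S ∩ f ⁻¹' S) + μ (S \ f ⁻¹' S) = μ S := measure_inter_add_diff _ (hf.measurable hSm)
    rw [h1, add_zero] at e2
    rw [inter_comm] at e3
    have hfin : μ (f ⁻¹' S ∩ S) ≠ ⊤ := measure_ne_top μ _
    have : μ (f ⁻¹' S ∩ S) + μ (S \ f ⁻¹' S) = μ (f ⁻¹' S ∩ S) + 0 := by
      rw [add_zero]
      calc μ (f ⁻¹' S ∩ S) + μ (S \ f ⁻¹' S) = μ S := e3
        _ = μ (f ⁻¹' S) := e1.symm
        _ = μ (f ⁻¹' S ∩ S) := e2.symm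
    exact (ENNReal.add_right_inj hfin).mp this
  have hU : μ (⋃ q : ℚ, ({ω | (q : ℝ) < g ω} \ f ⁻¹' {ω | (q : ℝ) < g ω})) = 0 :=
    measure_iUnion_null key
  have hU' : ∀ᵐ ω ∂μ, ω ∉ ⋃ q : ℚ, ({ω | (q : ℝ) < g ω} \ f ⁻¹' {ω | (q : ℝ) < g ω}) :=
    measure_eq_zero_iff_ae_notMem.mp hU
  filter_upwards [h, hU'] with ω h1 h2
  by_contra hne
  have hlt : g (f ω) < g ω := lt_of_le_of_ne h1 hne
  obtain ⟨q, hq1, hq2⟩ := exists_rat_btwn hlt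
  exact h2 (mem_iUnion.mpr ⟨q, ⟨hq2, fun hc => absurd (show (q : ℝ) < g (f ω) from hc) (not_lt.mpr hq1.le)⟩⟩)

lemma ae_eq_comp_of_ae_le_comp {f : Ω → Ω} (hf : MeasurePreserving f μ μ) {g : Ω → ℝ}
    (hg : AEMeasurable g μ) (h : ∀ᵐ ω ∂μ, g (f ω) ≤ g ω) : ∀ᵐ ω ∂μ, g (f ω) = g ω := by
  obtain ⟨g', hg'm, hgg'⟩ := hg
  have hgg' : ∀ᵐ ω ∂μ, g ω = g' ω := hgg'
  have hcomp : ∀ᵐ ω ∂μ, g (f ω) = g' (f ω) := ae_comp hf hgg'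
  have h' : ∀ᵐ ω ∂μ, g' (f ω) ≤ g' ω := by
    filter_upwards [h, hcomp, hgg'] with ω h1 h2 h3
    rw [← h2, ← h3]; exact h1
  have key := ae_eq_comp_of_ae_le_comp_meas hf hg'm h'
  filter_upwards [key, hcomp, hgg'] with ω h1 h2 h3
  rw [h2, h3]; exact h1

lemma zero_or_one_of_ae_le {θ : Ω ≃ᵐ Ω} (herg : Ergodic (⇑θ) μ) {g : Ω → ℝ}
    (hg : Measurable g) (h : ∀ᵐ ω ∂μ, g (θ ω) ≤ g ω) :
    μ {ω | 0 < g ω} = 0 ∨ μ {ω | 0 < g ω} = 1 := by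
  have heq := ae_eq_comp_of_ae_le_comp_meas herg.toMeasurePreserving hg h
  have hset : (⇑θ) ⁻¹' {ω | 0 < g ω} =ᵐ[μ] {ω | 0 < g ω} := by
    rw [Filter.eventuallyEq_set]
    filter_upwards [heq] with ω hω
    simp only [mem_preimage, mem_setOf_eq, hω]
  rcases herg.quasiErgodic.ae_empty_or_univ₀
      (measurableSet_lt measurable_const hg).nullMeasurableSet hset with h0 | h1
  · left; rw [measure_congr h0]; simp
  · right; rw [measure_congr h1]; simp


/-! ### Lemmas about `Zterm` and `Zfam` -/

instance : Nonempty {k : ℕ // 1 ≤ k} := ⟨⟨1, le_rfl⟩⟩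

lemma Zterm_zero {θinv : Ω → Ω} (σ τ : Ω → ℝ) (ω : Ω) : Zterm θinv σ τ 0 ω = σ ω := by
  unfold Zterm; simp

lemma Zterm_measurable {θ : Ω ≃ᵐ Ω} {σ τ : Ω → ℝ} (hσ : Measurable σ) (hτ : Measurable τ)
    (k : ℕ) : Measurable (Zterm (⇑θ.symm) σ τ k) := by
  apply Measurable.sub
  · exact hσ.comp (θ.symm.measurable.iterate k)
  · exact Finset.measurable_sum _ fun i _ => hτ.comp (θ.symm.measurable.iterate i)

lemma Zfam_measurable {θ : Ω ≃ᵐ Ω} {σ τ : Ω → ℝ} (hσ : Measurable σ) (hτ : Measurable τ) :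
    Measurable (Zfam (⇑θ.symm) σ τ 1) := by
  unfold Zfam pos
  exact (Measurable.iSup (f := fun (k : {k : ℕ // 1 ≤ k}) => Zterm (⇑θ.symm) σ τ (k : ℕ))
    (fun k => Zterm_measurable hσ hτ (k : ℕ))).max measurable_const

lemma Zterm_comp (θ : Ω ≃ᵐ Ω) (σ τ : Ω → ℝ) (k : ℕ) (ω : Ω) :
    Zterm (⇑θ.symm) σ τ (k + 1) (θ ω) = Zterm (⇑θ.symm) σ τ k ω - τ ω := by
  have hit : ∀ i : ℕ, (⇑θ.symm)^[i + 1] (θ ω) = (⇑θ.symm)^[i] ω := fun i => by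
    rw [Function.iterate_succ_apply]
    simp
  unfold Zterm
  have hs : ∀ (n : ℕ) (x : Ω), ∑ i ∈ Finset.Icc 1 n, τ ((⇑θ.symm)^[i] x)
      = ∑ i ∈ Finset.range n, τ ((⇑θ.symm)^[i + 1] x) := by
    intro n x
    rw [← Finset.Ico_add_one_right_eq_Icc, Finset.sum_Ico_eq_sum_range]
    simp [add_comm 1]
  rw [hs, hs, hit k]
  have hterm : ∀ i ∈ Finset.range (k + 1), τ ((⇑θ.symm)^[i + 1] (θ ω)) = τ ((⇑θ.symm)^[i] ω) :=
    fun i _ => by rw [hit i]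
  rw [Finset.sum_congr rfl hterm, Finset.sum_range_succ']
  simp only [Function.iterate_zero_apply]
  ring

lemma Z_le_solution {θ : Ω ≃ᵐ Ω} {σ τ : Ω → ℝ} (hmp : MeasurePreserving (⇑θ) μ μ)
    {V : Ω → ℝ} (hV0 : ∀ᵐ ω ∂μ, 0 ≤ V ω)
    (hVr : ∀ᵐ ω ∂μ, V (θ ω) = pos (max (V ω) (σ ω) - τ ω)) :
    ∀ᵐ ω ∂μ, (∀ k : ℕ, Zterm (⇑θ.symm) σ τ (k + 1) ω ≤ V ω) ∧ Zfam (⇑θ.symm) σ τ 1 ω ≤ V ω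
      ∧ BddAbove (Set.range fun k : {k : ℕ // 1 ≤ k} => Zterm (⇑θ.symm) σ τ (k : ℕ) ω) := by
  have hTmp : MeasurePreserving (⇑θ.symm) μ μ := hmp.symm θ
  have hiter : ∀ k : ℕ, ∀ᵐ ω ∂μ, V (θ ((⇑θ.symm)^[k] ω)) =
      pos (max (V ((⇑θ.symm)^[k] ω)) (σ ((⇑θ.symm)^[k] ω)) - τ ((⇑θ.symm)^[k] ω)) :=
    fun k => ae_comp (hTmp.iterate k) hVr
  filter_upwards [ae_all_iff.mpr hiter, hV0] with ω hω hV0ω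
  have key : ∀ k : ℕ, max (V ((⇑θ.symm)^[k + 1] ω)) (σ ((⇑θ.symm)^[k + 1] ω))
      - ∑ i ∈ Finset.Icc 1 (k + 1), τ ((⇑θ.symm)^[i] ω) ≤ V ω := by
    intro k
    induction k with
    | zero =>
      have h0 := hω 1
      have hL : θ ((⇑θ.symm)^[1] ω) = ω := by
        rw [Function.iterate_one]; exact θ.apply_symm_apply ω
      rw [hL] at h0
      have h1 : max (V ((⇑θ.symm)^[1] ω)) (σ ((⇑θ.symm)^[1] ω)) - τ ((⇑θ.symm)^[1] ω) ≤ V ω :=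
        h0 ▸ ule_pos _
      have h2 : ∑ i ∈ Finset.Icc 1 1, τ ((⇑θ.symm)^[i] ω) = τ ((⇑θ.symm)^[1] ω) := by
        rw [Finset.Icc_self, Finset.sum_singleton]
      rw [h2]; exact h1
    | succ k ih =>
      have hk := hω (k + 2)
      have hL : θ ((⇑θ.symm)^[k + 2] ω) = (⇑θ.symm)^[k + 1] ω := by
        rw [Function.iterate_succ_apply' (⇑θ.symm) (k + 1) ω]
        exact θ.apply_symm_apply _
      rw [hL] at hk
      have h2 : max (V ((⇑θ.symm)^[k + 2] ω)) (σ ((⇑θ.symm)^[k + 2] ω)) - τ ((⇑θ.symm)^[k + 2] ω)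
          ≤ V ((⇑θ.symm)^[k + 1] ω) := hk ▸ ule_pos _
      have h3 : V ((⇑θ.symm)^[k + 1] ω) ≤ max (V ((⇑θ.symm)^[k + 1] ω)) (σ ((⇑θ.symm)^[k + 1] ω)) :=
        le_max_left _ _
      have hsum : ∑ i ∈ Finset.Icc 1 (k + 2), τ ((⇑θ.symm)^[i] ω)
          = ∑ i ∈ Finset.Icc 1 (k + 1), τ ((⇑θ.symm)^[i] ω) + τ ((⇑θ.symm)^[k + 2] ω) :=
        Finset.sum_Icc_succ_top (by omega) _
      rw [hsum]
      linarith
  have hzle : ∀ k : ℕ, Zterm (⇑θ.symm) σ τ (k + 1) ω ≤ V ω := by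
    intro k
    have h1 := key k
    unfold Zterm
    have h2 : σ ((⇑θ.symm)^[k + 1] ω) ≤ max (V ((⇑θ.symm)^[k + 1] ω)) (σ ((⇑θ.symm)^[k + 1] ω)) :=
      le_max_right _ _
    linarith
  have hzle' : ∀ k : {k : ℕ // 1 ≤ k}, Zterm (⇑θ.symm) σ τ (k : ℕ) ω ≤ V ω := by
    rintro ⟨k, hk⟩
    obtain ⟨m, rfl⟩ : ∃ m, k = m + 1 := ⟨k - 1, by omega⟩
    exact hzle m
  refine ⟨hzle, ?_, ⟨V ω, by rintro x ⟨k, rfl⟩; exact hzle' k⟩⟩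
  unfold Zfam pos
  exact max_le (ciSup_le hzle') hV0ω

lemma Zfam_rec {θ : Ω ≃ᵐ Ω} {σ τ : Ω → ℝ} {ω : Ω} (hσ0 : 0 ≤ σ ω)
    (hbdd : BddAbove (Set.range fun k : {k : ℕ // 1 ≤ k} => Zterm (⇑θ.symm) σ τ (k : ℕ) ω)) :
    Zfam (⇑θ.symm) σ τ 1 (θ ω) = pos (max (Zfam (⇑θ.symm) σ τ 1 ω) (σ ω) - τ ω) := by
  obtain ⟨c, hc⟩ := hbdd
  set s := ⨆ k : {k : ℕ // 1 ≤ k}, Zterm (⇑θ.symm) σ τ (k : ℕ) ω with hsdef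
  have hbdd' : BddAbove (Set.range fun k : {k : ℕ // 1 ≤ k} => Zterm (⇑θ.symm) σ τ (k : ℕ) ω) :=
    ⟨c, hc⟩
  have hterm : ∀ m : ℕ, Zterm (⇑θ.symm) σ τ (m + 1) (θ ω) = Zterm (⇑θ.symm) σ τ m ω - τ ω :=
    fun m => Zterm_comp θ σ τ m ω
  have hmem : ∀ m : ℕ, 1 ≤ m → Zterm (⇑θ.symm) σ τ m ω ≤ s := by
    intro m hm
    exact le_ciSup hbdd' (⟨m, hm⟩ : {k : ℕ // 1 ≤ k})
  -- bound for the family at θ ω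
  have hbddθ : BddAbove (Set.range fun k : {k : ℕ // 1 ≤ k} => Zterm (⇑θ.symm) σ τ (k : ℕ) (θ ω)) := by
    refine ⟨max c (σ ω) - τ ω, ?_⟩
    rintro x ⟨⟨k, hk⟩, rfl⟩
    obtain ⟨m, rfl⟩ : ∃ m, k = m + 1 := ⟨k - 1, by omega⟩
    simp only
    rw [hterm m]
    rcases Nat.eq_zero_or_pos m with rfl | hm
    · rw [Zterm_zero]
      have : σ ω ≤ max c (σ ω) := le_max_right _ _
      linarith
    · have : Zterm (⇑θ.symm) σ τ m ω ≤ c := hc ⟨(⟨m, hm⟩ : {k : ℕ // 1 ≤ k}), rfl⟩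
      have : Zterm (⇑θ.symm) σ τ m ω ≤ max c (σ ω) := this.trans (le_max_left _ _)
      linarith
  set sθ := ⨆ k : {k : ℕ // 1 ≤ k}, Zterm (⇑θ.symm) σ τ (k : ℕ) (θ ω) with hsθdef
  have le1 : sθ ≤ max (pos s) (σ ω) - τ ω := by
    refine ciSup_le ?_
    rintro ⟨k, hk⟩
    obtain ⟨m, rfl⟩ : ∃ m, k = m + 1 := ⟨k - 1, by omega⟩
    simp only
    rw [hterm m]
    rcases Nat.eq_zero_or_pos m with rfl | hm
    · rw [Zterm_zero]
      have : σ ω ≤ max (pos s) (σ ω) := le_max_right _ _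
      linarith
    · have h1 : Zterm (⇑θ.symm) σ τ m ω ≤ s := hmem m hm
      have h2 : s ≤ pos s := ule_pos s
      have h3 : pos s ≤ max (pos s) (σ ω) := le_max_left _ _
      linarith
  have le2 : max (pos s) (σ ω) - τ ω ≤ sθ := by
    have hσs : σ ω - τ ω ≤ sθ := by
      have h1 : Zterm (⇑θ.symm) σ τ 1 (θ ω) = σ ω - τ ω := by
        rw [hterm 0, Zterm_zero]
      have h2 : Zterm (⇑θ.symm) σ τ 1 (θ ω) ≤ sθ := le_ciSup hbddθ (⟨1, le_rfl⟩ : {k : ℕ // 1 ≤ k})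
      linarith
    have hss : s - τ ω ≤ sθ := by
      have h1 : s ≤ sθ + τ ω := by
        refine ciSup_le ?_
        rintro ⟨k, hk⟩
        have h2 : Zterm (⇑θ.symm) σ τ (k + 1) (θ ω) ≤ sθ :=
          le_ciSup hbddθ (⟨k + 1, by omega⟩ : {k : ℕ // 1 ≤ k})
        rw [hterm k] at h2
        simp only
        linarith
      linarith
    have h0 : (0 : ℝ) - τ ω ≤ sθ := by
      have := hσs; linarith
    have : max (pos s) (σ ω) = max (max s 0) (σ ω) := rfl
    rw [this]
    rcases max_cases (max s 0) (σ ω) with ⟨h, _⟩ | ⟨h, _⟩ <;> rw [h]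
    · rcases max_cases s 0 with ⟨h', _⟩ | ⟨h', _⟩ <;> rw [h']
      · exact hss
      · exact h0
    · exact hσs
  -- conclude
  unfold Zfam
  rw [← hsθdef, ← hsdef]
  have heq : sθ = max (pos s) (σ ω) - τ ω := le_antisymm le1 le2
  unfold pos
  rw [heq]
  rfl


/-! ### The key lemma: any solution of the scalar recursion vanishes a.e. on `{Z₁ = 0}` -/

lemma main_zero {θ : Ω ≃ᵐ Ω} (hergo : Ergodic (⇑θ) μ) {σ τ : Ω → ℝ}
    (hσm : Measurable σ) (hτm : Measurable τ)
    (hσ0 : ∀ᵐ ω ∂μ, 0 ≤ σ ω) (hτ0 : ∀ᵐ ω ∂μ, 0 < τ ω)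
    {V : Ω → ℝ} (hVmeas : Measurable V) (hV0 : ∀ᵐ ω ∂μ, 0 ≤ V ω)
    (hVr : ∀ᵐ ω ∂μ, V (θ ω) = pos (max (V ω) (σ ω) - τ ω)) :
    ∀ᵐ ω ∂μ, Zfam (⇑θ.symm) σ τ 1 ω = 0 → V ω = 0 := by
  have hmp := hergo.toMeasurePreserving
  have hmin := Z_le_solution hmp hV0 hVr
  set Z := Zfam (⇑θ.symm) σ τ 1 with hZdef
  have hZrec : ∀ᵐ ω ∂μ, Z (θ ω) = pos (max (Z ω) (σ ω) - τ ω) := by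
    filter_upwards [hσ0, hmin] with ω h1 h2
    exact Zfam_rec h1 h2.2.2
  set W := fun ω => V ω - Z ω with hWdef
  have hWmeas : Measurable W := hVmeas.sub (Zfam_measurable hσm hτm)
  have hWle : ∀ᵐ ω ∂μ, W (θ ω) ≤ W ω := by
    filter_upwards [hmin, hZrec, hVr] with ω h1 h2 h3
    have hzv : Z ω ≤ V ω := h1.2.1
    have l1 : max (Z ω) (σ ω) - τ ω ≤ max (V ω) (σ ω) - τ ω := by
      have := max_le_max hzv (le_refl (σ ω)); linarith
    have l2 := upos_sub_le l1
    have l3 : max (V ω) (σ ω) ≤ max (Z ω) (σ ω) + (V ω - Z ω) := by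
      rcases le_total (V ω) (σ ω) with h | h <;> rcases le_total (Z ω) (σ ω) with h' | h'
      · rw [max_eq_right h, max_eq_right h']; linarith
      · rw [max_eq_right h, max_eq_left h']; linarith
      · rw [max_eq_left h, max_eq_right h']; linarith
      · rw [max_eq_left h, max_eq_left h']; linarith
    simp only [hWdef]
    rw [h3, h2]
    linarith
  have hWeq := ae_eq_comp_of_ae_le_comp_meas hmp hWmeas hWle
  filter_upwards [hWeq, hVr, hZrec, hσ0, hτ0, hV0] with ω heq hVrω hZrecω hσω hτω hV0ω
  intro hZ0
  simp only [hWdef] at heq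
  rw [hVrω, hZrecω, hZ0] at heq
  rw [max_comm (0 : ℝ) (σ ω), max_eq_left hσω] at heq
  have heq' : pos (max (V ω) (σ ω) - τ ω) - pos (σ ω - τ ω) = V ω := by linarith
  exact endgame hV0ω hσω hτω heq'


end StmtAux

theorem stmt6 {Ω : Type*} [MeasurableSpace Ω] (μ : MeasureTheory.Measure Ω)
    [MeasureTheory.IsProbabilityMeasure μ]
    (θ : Ω ≃ᵐ Ω) (hergo : Ergodic (⇑θ) μ)
    (σ τ : Ω → ℝ) (hσint : MeasureTheory.Integrable σ μ) (hτint : MeasureTheory.Integrable τ μ)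
    (hσ0 : ∀ᵐ ω ∂μ, 0 ≤ σ ω) (hτ0 : ∀ᵐ ω ∂μ, 0 < τ ω)
    (p : ℕ) (hp : 1 ≤ p)
    (hZ1 : 0 < μ {ω | Zfam (⇑θ.symm) σ τ 1 ω = 0})
    (Y Y' : Ω → Fin p → ℝ) (hYm : Measurable Y) (hY'm : Measurable Y')
    (hYs : ∀ᵐ ω ∂μ, OSorted (Y ω)) (hY's : ∀ᵐ ω ∂μ, OSorted (Y' ω))
    (hYr : ∀ᵐ ω ∂μ, Y (θ ω) = Psi p (σ ω) (τ ω) (Y ω))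
    (hY'r : ∀ᵐ ω ∂μ, Y' (θ ω) = Psi p (σ ω) (τ ω) (Y' ω)) :
    Y =ᵐ[μ] Y' := by
  classical
  have hmp : MeasureTheory.MeasurePreserving (⇑θ) μ μ := hergo.toMeasurePreserving
  obtain ⟨σ', hσ'm, hσσ'⟩ := hσint.aemeasurable
  obtain ⟨τ', hτ'm, hττ'⟩ := hτint.aemeasurable
  replace hσσ' : ∀ᵐ ω ∂μ, σ ω = σ' ω := hσσ'
  replace hττ' : ∀ᵐ ω ∂μ, τ ω = τ' ω := hττ'
  have hσ0' : ∀ᵐ ω ∂μ, 0 ≤ σ' ω := by filter_upwards [hσ0, hσσ'] with ω h1 h2; rwa [← h2]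
  have hτ0' : ∀ᵐ ω ∂μ, 0 < τ' ω := by filter_upwards [hτ0, hττ'] with ω h1 h2; rwa [← h2]
  have hYr2 : ∀ᵐ ω ∂μ, Y (θ ω) = Psi p (σ' ω) (τ' ω) (Y ω) := by
    filter_upwards [hYr, hσσ', hττ'] with ω h1 h2 h3; rw [← h2, ← h3]; exact h1
  have hY'r2 : ∀ᵐ ω ∂μ, Y' (θ ω) = Psi p (σ' ω) (τ' ω) (Y' ω) := by
    filter_upwards [hY'r, hσσ', hττ'] with ω h1 h2 h3; rw [← h2, ← h3]; exact h1
  -- transfer the Z hypothesis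
  have hagree : ∀ᵐ ω ∂μ, ∀ k : ℕ, σ ((⇑θ.symm)^[k] ω) = σ' ((⇑θ.symm)^[k] ω)
      ∧ τ ((⇑θ.symm)^[k] ω) = τ' ((⇑θ.symm)^[k] ω) := by
    have hbase : ∀ᵐ ω ∂μ, σ ω = σ' ω ∧ τ ω = τ' ω := by
      filter_upwards [hσσ', hττ'] with ω h1 h2; exact ⟨h1, h2⟩
    exact ae_all_iff.mpr fun k => StmtAux.ae_comp ((hmp.symm θ).iterate k) hbase
  have hZeq : ∀ᵐ ω ∂μ, Zfam (⇑θ.symm) σ τ 1 ω = Zfam (⇑θ.symm) σ' τ' 1 ω := by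
    filter_upwards [hagree] with ω hω
    unfold Zfam
    congr 1
    refine iSup_congr ?_
    rintro ⟨k, hk⟩
    unfold Zterm
    rw [(hω k).1]
    congr 1
    exact Finset.sum_congr rfl fun i _ => (hω i).2
  have hZ1' : 0 < μ {ω | Zfam (⇑θ.symm) σ' τ' 1 ω = 0} := by
    have hset : {ω | Zfam (⇑θ.symm) σ τ 1 ω = 0} =ᵐ[μ] {ω | Zfam (⇑θ.symm) σ' τ' 1 ω = 0} := by
      rw [Filter.eventuallyEq_set]
      filter_upwards [hZeq] with ω h
      simp [Set.mem_setOf_eq, h]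
    rwa [measure_congr hset] at hZ1
  set Z := Zfam (⇑θ.symm) σ' τ' 1 with hZdef
  have habs : ∀ (Q : Ω → Prop), (∀ᵐ ω ∂μ, Q ω) → ∃ ω, Z ω = 0 ∧ Q ω := by
    intro Q hQ
    by_contra hcon
    push_neg at hcon
    have hsub : {ω | Z ω = 0} ⊆ {ω | ¬ Q ω} := fun ω hω hq => hcon ω hω hq
    have hnull : μ {ω | Z ω = 0} = 0 := measure_mono_null hsub (ae_iff.mp hQ)
    rw [hnull] at hZ1'
    exact lt_irrefl 0 hZ1'
  -- the top coordinate
  have hplt : p - 1 < p := by omega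
  set jl : Fin p := ⟨p - 1, hplt⟩ with hjl
  have hjlval : (jl : ℕ) = p - 1 := rfl
  have hPsiTop : ∀ (u : Fin p → ℝ) (s t : ℝ), Psi p s t u jl = pos (max (u jl) s - t) := by
    intro u s t
    have hc : ¬((jl : ℕ) + 1 < p) := by rw [hjlval]; omega
    unfold Psi
    rw [dif_neg hc]
  have hPsiMid : ∀ (u : Fin p → ℝ) (s t : ℝ) (j : Fin p) (h : (j : ℕ) + 1 < p),
      Psi p s t u j = pos (min (max (u j) s) (u ⟨(j : ℕ) + 1, h⟩) - t) := by
    intro u s t j h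
    unfold Psi
    rw [dif_pos h]
  set Vt := fun ω => Y ω jl with hVt
  set V't := fun ω => Y' ω jl with hV't
  have hVtm : Measurable Vt := (measurable_pi_apply jl).comp hYm
  have hV'tm : Measurable V't := (measurable_pi_apply jl).comp hY'm
  have hVt0 : ∀ᵐ ω ∂μ, 0 ≤ Vt ω := by filter_upwards [hYs] with ω h; exact h.1 jl
  have hV't0 : ∀ᵐ ω ∂μ, 0 ≤ V't ω := by filter_upwards [hY's] with ω h; exact h.1 jl
  have hVtr : ∀ᵐ ω ∂μ, Vt (θ ω) = pos (max (Vt ω) (σ' ω) - τ' ω) := by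
    filter_upwards [hYr2] with ω h
    calc Vt (θ ω) = Psi p (σ' ω) (τ' ω) (Y ω) jl := by simp only [hVt]; rw [h]
      _ = pos (max (Vt ω) (σ' ω) - τ' ω) := hPsiTop (Y ω) (σ' ω) (τ' ω)
  have hV'tr : ∀ᵐ ω ∂μ, V't (θ ω) = pos (max (V't ω) (σ' ω) - τ' ω) := by
    filter_upwards [hY'r2] with ω h
    calc V't (θ ω) = Psi p (σ' ω) (τ' ω) (Y' ω) jl := by simp only [hV't]; rw [h]
      _ = pos (max (V't ω) (σ' ω) - τ' ω) := hPsiTop (Y' ω) (σ' ω) (τ' ω)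
  have hMain := StmtAux.main_zero hergo hσ'm hτ'm hσ0' hτ0' hVtm hVt0 hVtr
  have hMain' := StmtAux.main_zero hergo hσ'm hτ'm hσ0' hτ0' hV'tm hV't0 hV'tr
  -- downward induction on the coordinates
  have key : ∀ n : ℕ, ∀ j : Fin p, p - 1 - (j : ℕ) ≤ n →
      (fun ω => Y ω j) =ᵐ[μ] fun ω => Y' ω j := by
    intro n
    induction n with
    | zero =>
      intro j hj
      have hjeq : j = jl := by
        apply Fin.ext
        have h1 := j.isLt
        rw [hjlval]
        omega
      subst hjeq
      set D := fun ω => |Vt ω - V't ω| with hD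
      have hDm : Measurable D := (hVtm.sub hV'tm).abs
      have hDle : ∀ᵐ ω ∂μ, D (θ ω) ≤ D ω := by
        filter_upwards [hVtr, hV'tr] with ω h1 h2
        simp only [hD]
        rw [h1, h2]
        calc |pos (max (Vt ω) (σ' ω) - τ' ω) - pos (max (V't ω) (σ' ω) - τ' ω)|
            ≤ |(max (Vt ω) (σ' ω) - τ' ω) - (max (V't ω) (σ' ω) - τ' ω)| := StmtAux.upos_lip _ _
          _ = |max (Vt ω) (σ' ω) - max (V't ω) (σ' ω)| := by ring_nf
          _ ≤ |Vt ω - V't ω| := StmtAux.umax_lip _ _ _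
      rcases StmtAux.zero_or_one_of_ae_le hergo hDm hDle with h0 | h1
      · have hae : ∀ᵐ ω ∂μ, ω ∉ {ω | 0 < D ω} := measure_eq_zero_iff_ae_notMem.mp h0
        filter_upwards [hae] with ω hω
        have : D ω = 0 := le_antisymm (not_lt.mp hω) (abs_nonneg _)
        have := abs_eq_zero.mp this
        simp only [hVt, hV't] at this ⊢
        linarith
      · exfalso
        have hD1 : ∀ᵐ ω ∂μ, 0 < D ω := by
          have hmeas : MeasurableSet {ω | 0 < D ω} := measurableSet_lt measurable_const hDm
          have hcompl : μ {ω | 0 < D ω}ᶜ = 0 := by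
            rw [measure_compl hmeas (measure_ne_top μ _), h1, measure_univ, tsub_self]
          rw [ae_iff]
          exact hcompl
        obtain ⟨ω, hZ0, hDpos, hv, hv'⟩ := habs
          (fun ω => 0 < D ω ∧ (Z ω = 0 → Vt ω = 0) ∧ (Z ω = 0 → V't ω = 0))
          (by filter_upwards [hD1, hMain, hMain'] with ω x y z; exact ⟨x, y, z⟩)
        rw [show D ω = |Vt ω - V't ω| from rfl, hv hZ0, hv' hZ0] at hDpos
        simp at hDpos
    | succ n ih =>
      intro j hj
      rcases Nat.lt_or_ge (p - 1 - (j : ℕ)) (n + 1) with hlt | hge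
      · exact ih j (by omega)
      have hj1 : (j : ℕ) + 1 < p := by omega
      set j1 : Fin p := ⟨(j : ℕ) + 1, hj1⟩ with hj1def
      have hj1val : (j1 : ℕ) = (j : ℕ) + 1 := rfl
      have hIH : (fun ω => Y ω j1) =ᵐ[μ] fun ω => Y' ω j1 := ih j1 (by rw [hj1val]; omega)
      set M := fun ω => Y ω j1 with hM
      have hrecY : ∀ᵐ ω ∂μ, Y (θ ω) j = pos (min (max (Y ω j) (σ' ω)) (M ω) - τ' ω) := by
        filter_upwards [hYr2] with ω h
        calc Y (θ ω) j = Psi p (σ' ω) (τ' ω) (Y ω) j := by rw [h]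
          _ = pos (min (max (Y ω j) (σ' ω)) (Y ω ⟨(j : ℕ) + 1, hj1⟩) - τ' ω) :=
            hPsiMid (Y ω) (σ' ω) (τ' ω) j hj1
          _ = pos (min (max (Y ω j) (σ' ω)) (M ω) - τ' ω) := rfl
      have hrecY' : ∀ᵐ ω ∂μ, Y' (θ ω) j = pos (min (max (Y' ω j) (σ' ω)) (M ω) - τ' ω) := by
        filter_upwards [hY'r2, hIH] with ω h hIHω
        calc Y' (θ ω) j = Psi p (σ' ω) (τ' ω) (Y' ω) j := by rw [h]
          _ = pos (min (max (Y' ω j) (σ' ω)) (Y' ω ⟨(j : ℕ) + 1, hj1⟩) - τ' ω) :=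
            hPsiMid (Y' ω) (σ' ω) (τ' ω) j hj1
          _ = pos (min (max (Y' ω j) (σ' ω)) (M ω) - τ' ω) := by
            have hrw : Y' ω ⟨(j : ℕ) + 1, hj1⟩ = M ω := by rw [hIHω, hj1def]
            rw [hrw]
      set D := fun ω => |Y ω j - Y' ω j| with hD
      have hDm : Measurable D :=
        (((measurable_pi_apply j).comp hYm).sub ((measurable_pi_apply j).comp hY'm)).abs
      have hDle : ∀ᵐ ω ∂μ, D (θ ω) ≤ D ω := by
        filter_upwards [hrecY, hrecY'] with ω h1 h2
        simp only [hD]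
        rw [h1, h2]
        calc |pos (min (max (Y ω j) (σ' ω)) (M ω) - τ' ω)
              - pos (min (max (Y' ω j) (σ' ω)) (M ω) - τ' ω)|
            ≤ |(min (max (Y ω j) (σ' ω)) (M ω) - τ' ω)
              - (min (max (Y' ω j) (σ' ω)) (M ω) - τ' ω)| := StmtAux.upos_lip _ _
          _ = |min (max (Y ω j) (σ' ω)) (M ω) - min (max (Y' ω j) (σ' ω)) (M ω)| := by ring_nf
          _ ≤ |max (Y ω j) (σ' ω) - max (Y' ω j) (σ' ω)| := StmtAux.umin_lip _ _ _
          _ ≤ |Y ω j - Y' ω j| := StmtAux.umax_lip _ _ _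
      rcases StmtAux.zero_or_one_of_ae_le hergo hDm hDle with h0 | h1
      · have hae : ∀ᵐ ω ∂μ, ω ∉ {ω | 0 < D ω} := measure_eq_zero_iff_ae_notMem.mp h0
        filter_upwards [hae] with ω hω
        have h2 : D ω = 0 := le_antisymm (not_lt.mp hω) (abs_nonneg _)
        have h3 := abs_eq_zero.mp h2
        show Y ω j = Y' ω j
        linarith
      · exfalso
        have hDeq := StmtAux.ae_eq_comp_of_ae_le_comp_meas hmp hDm hDle
        have hD1 : ∀ᵐ ω ∂μ, 0 < D ω := by
          have hmeas : MeasurableSet {ω | 0 < D ω} := measurableSet_lt measurable_const hDm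
          have hcompl : μ {ω | 0 < D ω}ᶜ = 0 := by
            rw [measure_compl hmeas (measure_ne_top μ _), h1, measure_univ, tsub_self]
          rw [ae_iff]
          exact hcompl
        have hτM : ∀ᵐ ω ∂μ, τ' ω ≤ Vt ω := by
          filter_upwards [hDeq, hD1, hrecY, hrecY', hYs] with ω heqω hposω h1ω h2ω hsort
          have hne : Y ω j ≠ Y' ω j := by
            intro hcon
            rw [show D ω = |Y ω j - Y' ω j| from rfl, hcon] at hposω
            simp at hposω
          have heq2 : |pos (min (max (Y ω j) (σ' ω)) (M ω) - τ' ω)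
              - pos (min (max (Y' ω j) (σ' ω)) (M ω) - τ' ω)| = |Y ω j - Y' ω j| := by
            rw [← h1ω, ← h2ω]
            exact heqω
          have hτm' := StmtAux.forces_ge hne heq2
          have hmono : Y ω j1 ≤ Y ω jl := hsort.2 (by
            rw [Fin.le_def, hj1val, hjlval]
            omega)
          calc τ' ω ≤ M ω := hτm'
            _ = Y ω j1 := rfl
            _ ≤ Y ω jl := hmono
            _ = Vt ω := rfl
        obtain ⟨ω, hZ0, h1', h2', h3'⟩ := habs
          (fun ω => τ' ω ≤ Vt ω ∧ 0 < τ' ω ∧ (Z ω = 0 → Vt ω = 0))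
          (by filter_upwards [hτM, hτ0', hMain] with ω x y z; exact ⟨x, y, z⟩)
        rw [h3' hZ0] at h1'
        linarith
  have hall : ∀ j : Fin p, (fun ω => Y ω j) =ᵐ[μ] fun ω => Y' ω j := fun j => key p j (by omega)
  have hfin := ae_all_iff.mpr hall
  filter_upwards [hfin] with ω hω
  funext j
  exact hω j
end

section
/- Fix reals σ ≥ 0 and τ ≥ 0, and integers S ≥ 2, 1 ≤ p ≤ S−1. The map Φ^p is nondecreasing for the coordinatewise order: if u, v ∈ Ō_S satisfy u(i) ≤ v(i) for all i ∈ {1,…,S}, then Φ^p(u)(i) ≤ Φ^p(v)(i) for all i ∈ {1,…,S}. -/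
open MeasureTheory ProbabilityTheory Filter

theorem stmt8 (σ τ : ℝ) (hσ : 0 ≤ σ) (hτ : 0 ≤ τ)
    (S p : ℕ) (hS : 2 ≤ S) (hp1 : 1 ≤ p) (hpS : p ≤ S - 1)
    (u v : Fin S → ℝ) (hu : OSorted u) (hv : OSorted v)
    (huv : ∀ i, u i ≤ v i) :
    ∀ i, Phi S p (by omega) σ τ u i ≤ Phi S p (by omega) σ τ v i := by
  intro i
  have h01 : ∀ j : Fin S, 0 < u j → 0 < v j := fun j h => lt_of_lt_of_le h (huv j)
  simp only [Phi, pos]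
  split_ifs <;>
    gcongr <;>
      first
        | exact huv _
        | exact hv.1 _
        | exact le_trans (hu.1 _) (huv _)
        | (rename_i h2 h3; exact absurd (h01 _ h2) h3)
end
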